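/- arXiv:2008.10035 — 2 statements merged into one kernel-verified Lean document; each statement's English description precedes it below -/
import Mathlib

section
/- The pure virtual twin group PVT_4 is isomorphic to the free product (ℤ × ℤ) * (ℤ × ℤ) * (ℤ × ℤ). -/
namespace VTG

open scoped commutatorElement

abbrev Gen (n : ℕ) := Fin (n-1) ⊕ Fin (n-1)

/-- The free-group letter corresponding to the generator `s_i`. -/
def fs {n : ℕ} (i : Fin (n-1)) : FreeGroup (Gen n) := FreeGroup.of (Sum.inl i)

/-- The free-group letter corresponding to the generator `ρ_i`. -/
def fr {n : ℕ} (i : Fin (n-1)) : FreeGroup (Gen n) := FreeGroup.of (Sum.inr i)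

/-- The defining relations of the virtual twin group `VT_n`. -/
def vtRels (n : ℕ) : Set (FreeGroup (Gen n)) :=
  { w | (∃ i : Fin (n-1), w = fs i * fs i) ∨
        (∃ i j : Fin (n-1), (i : ℕ) + 2 ≤ (j : ℕ) ∧ w = ⁅fs i, fs j⁆) ∨
        (∃ i : Fin (n-1), w = fr i * fr i) ∨
        (∃ i j : Fin (n-1), (i : ℕ) + 2 ≤ (j : ℕ) ∧ w = ⁅fr i, fr j⁆) ∨
        (∃ i j : Fin (n-1), (j : ℕ) = (i : ℕ) + 1 ∧
          w = fr i * fr j * fr i * (fr j * fr i * fr j)⁻¹) ∨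
        (∃ i j : Fin (n-1), (i : ℕ) + 2 ≤ (j : ℕ) ∧ (w = ⁅fr i, fs j⁆ ∨ w = ⁅fs i, fr j⁆)) ∨
        (∃ i j : Fin (n-1), (j : ℕ) = (i : ℕ) + 1 ∧
          w = fr i * fr j * fs i * (fs j * fr i * fr j)⁻¹) }

/-- The virtual twin group `VT_n`. -/
abbrev VT (n : ℕ) := PresentedGroup (vtRels n)

/-- The generator `s_{k+1}` (1-based numbering) of `VT_n`. -/
def sg {n : ℕ} (k : ℕ) (h : k < n - 1) : VT n := PresentedGroup.of (Sum.inl ⟨k, h⟩)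

/-- The generator `ρ_{k+1}` (1-based numbering) of `VT_n`. -/
def rg {n : ℕ} (k : ℕ) (h : k < n - 1) : VT n := PresentedGroup.of (Sum.inr ⟨k, h⟩)

/-- The transposition `(i, i+1)` in the symmetric group on `n` letters. -/
def tr {n : ℕ} (i : Fin (n - 1)) : Equiv.Perm (Fin n) :=
  Equiv.swap ⟨i.1, by have := i.2; omega⟩ ⟨i.1 + 1, by have := i.2; omega⟩

lemma swap_commute {α : Type*} [DecidableEq α] {a b c d : α}
    (h1 : a ≠ c) (h2 : a ≠ d) (h3 : b ≠ c) (h4 : b ≠ d) :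
    Commute (Equiv.swap a b) (Equiv.swap c d) := by
  apply Equiv.Perm.Disjoint.commute
  intro x
  by_cases hxa : x = a
  · subst hxa; right; exact Equiv.swap_apply_of_ne_of_ne h1 h2
  · by_cases hxb : x = b
    · subst hxb; right; exact Equiv.swap_apply_of_ne_of_ne h3 h4
    · left; exact Equiv.swap_apply_of_ne_of_ne hxa hxb

lemma tr_commute {n : ℕ} {i j : Fin (n-1)} (h : (i : ℕ) + 2 ≤ (j : ℕ)) :
    Commute (tr (n := n) i) (tr j) := by
  apply swap_commute <;>
    (intro hEq; apply_fun Fin.val at hEq; simp only [] at hEq; omega)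

lemma tr_braid {n : ℕ} {i j : Fin (n-1)} (h : (j : ℕ) = (i : ℕ) + 1) :
    tr (n := n) i * tr j * tr i = tr j * tr i * tr j := by
  have hj2 : (i : ℕ) + 2 ≤ n := by have := j.2; omega
  set a : Fin n := ⟨i.1, by omega⟩ with ha
  set b : Fin n := ⟨i.1 + 1, by omega⟩ with hb
  set c : Fin n := ⟨i.1 + 2, by omega⟩ with hc
  have hab : a ≠ b := by simp [ha, hb, Fin.ext_iff]
  have hbc : b ≠ c := by simp [hb, hc, Fin.ext_iff]
  have hac : a ≠ c := by simp [ha, hc, Fin.ext_iff]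
  have h1 : tr (n := n) i = Equiv.swap a b := rfl
  have h2 : tr (n := n) j = Equiv.swap b c := by
    unfold tr
    congr 1 <;> exact Fin.ext (by simp [hb, hc, h])
  rw [h1, h2]
  have L := Equiv.swap_mul_swap_mul_swap (x := c) (y := b) (z := a)
    (hbc.symm) (hac.symm)
  have R := Equiv.swap_mul_swap_mul_swap (x := a) (y := b) (z := c)
    (hab) (hac)
  calc Equiv.swap a b * Equiv.swap b c * Equiv.swap a b
      = Equiv.swap b a * Equiv.swap c b * Equiv.swap b a := by
        rw [Equiv.swap_comm a b, Equiv.swap_comm b c]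
    _ = Equiv.swap a c := L
    _ = Equiv.swap c a := Equiv.swap_comm a c
    _ = Equiv.swap b c * Equiv.swap a b * Equiv.swap b c := R.symm

lemma tr_sq {n : ℕ} (i : Fin (n-1)) : tr (n := n) i * tr i = 1 := Equiv.swap_mul_self _ _

/-- The canonical projection `π : VT_n → S_n`. -/
def perm (n : ℕ) : VT n →* Equiv.Perm (Fin n) :=
  PresentedGroup.toGroup (f := Sum.elim tr tr) (by
    rintro w (⟨i, rfl⟩ | ⟨i, j, hij, rfl⟩ | ⟨i, rfl⟩ | ⟨i, j, hij, rfl⟩ |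
      ⟨i, j, hij, rfl⟩ | ⟨i, j, hij, (rfl | rfl)⟩ | ⟨i, j, hij, rfl⟩)
    · simp [fs, tr_sq]
    · rw [map_commutatorElement]
      simp only [fs, FreeGroup.lift_apply_of, Sum.elim_inl]
      exact commutatorElement_eq_one_iff_commute.mpr (tr_commute hij)
    · simp [fr, tr_sq]
    · rw [map_commutatorElement]
      simp only [fr, FreeGroup.lift_apply_of, Sum.elim_inr]
      exact commutatorElement_eq_one_iff_commute.mpr (tr_commute hij)
    · have h1 : FreeGroup.lift (Sum.elim tr tr) (fr i * fr j * fr (n := n) i)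
          = tr i * tr j * tr i := by simp [fr]
      have h2 : FreeGroup.lift (Sum.elim tr tr) (fr j * fr i * fr (n := n) j)
          = tr j * tr i * tr j := by simp [fr]
      rw [map_mul, map_inv, h1, h2, tr_braid hij, mul_inv_cancel]
    · rw [map_commutatorElement]
      simp only [fr, fs, FreeGroup.lift_apply_of, Sum.elim_inl, Sum.elim_inr]
      exact commutatorElement_eq_one_iff_commute.mpr (tr_commute hij)
    · rw [map_commutatorElement]
      simp only [fr, fs, FreeGroup.lift_apply_of, Sum.elim_inl, Sum.elim_inr]
      exact commutatorElement_eq_one_iff_commute.mpr (tr_commute hij)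
    · have h1 : FreeGroup.lift (Sum.elim tr tr) (fr i * fr j * fs (n := n) i)
          = tr i * tr j * tr i := by simp [fr, fs]
      have h2 : FreeGroup.lift (Sum.elim tr tr) (fs j * fr i * fr (n := n) j)
          = tr j * tr i * tr j := by simp [fr, fs]
      rw [map_mul, map_inv, h1, h2, tr_braid hij, mul_inv_cancel])



abbrev M := Multiplicative (ℤ × ℤ)
abbrev K := Monoid.Coprod (Monoid.Coprod M M) M

open Monoid

/-- hom from ℤ² determined by two commuting elements -/
def hp {T : Type*} [Group T] (u v : T) (h : Commute u v) : M →* T :=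
  MonoidHom.mk' (fun x => u ^ x.toAdd.1 * v ^ x.toAdd.2) (by
    intro a b
    show u ^ (a * b).toAdd.1 * v ^ (a * b).toAdd.2 = _
    simp only [toAdd_mul, Prod.fst_add, Prod.snd_add, zpow_add]
    calc u ^ a.toAdd.1 * u ^ b.toAdd.1 * (v ^ a.toAdd.2 * v ^ b.toAdd.2)
        = u ^ a.toAdd.1 * (u ^ b.toAdd.1 * v ^ a.toAdd.2) * v ^ b.toAdd.2 := by group
      _ = u ^ a.toAdd.1 * (v ^ a.toAdd.2 * u ^ b.toAdd.1) * v ^ b.toAdd.2 := by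
          rw [(h.symm.zpow_zpow _ _).eq]
      _ = _ := by group)

@[simp] lemma hp_u {T : Type*} [Group T] (u v : T) (h : Commute u v) :
    hp u v h (Multiplicative.ofAdd (1, 0)) = u := by
  show u ^ (1 : ℤ) * v ^ (0 : ℤ) = u
  simp

@[simp] lemma hp_v {T : Type*} [Group T] (u v : T) (h : Commute u v) :
    hp u v h (Multiplicative.ofAdd (0, 1)) = v := by
  show u ^ (0 : ℤ) * v ^ (1 : ℤ) = v
  simp

lemma M_ext {T : Type*} [Group T] {f g : M →* T}
    (h1 : f (Multiplicative.ofAdd (1, 0)) = g (Multiplicative.ofAdd (1, 0)))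
    (h2 : f (Multiplicative.ofAdd (0, 1)) = g (Multiplicative.ofAdd (0, 1))) : f = g := by
  refine MonoidHom.ext fun x => ?_
  have hx : x = (Multiplicative.ofAdd ((1 : ℤ), (0 : ℤ))) ^ x.toAdd.1 *
      (Multiplicative.ofAdd ((0 : ℤ), (1 : ℤ))) ^ x.toAdd.2 := by
    rw [← ofAdd_zsmul, ← ofAdd_zsmul, ← ofAdd_add, ← ofAdd_toAdd x]
    congr 1
    simp [Prod.ext_iff]
  rw [hx, map_mul, map_mul, map_zpow, map_zpow, map_zpow, map_zpow, h1, h2]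

/-- the six generators of K -/
def x12 : K := Coprod.inl (Coprod.inl (Multiplicative.ofAdd (1, 0)))
def x34 : K := Coprod.inl (Coprod.inl (Multiplicative.ofAdd (0, 1)))
def x13 : K := Coprod.inl (Coprod.inr (Multiplicative.ofAdd (1, 0)))
def x24 : K := Coprod.inl (Coprod.inr (Multiplicative.ofAdd (0, 1)))
def x14 : K := Coprod.inr (Multiplicative.ofAdd (1, 0))
def x23 : K := Coprod.inr (Multiplicative.ofAdd (0, 1))

lemma K_ext {T : Type*} [Group T] {f g : K →* T}
    (h1 : f x12 = g x12) (h2 : f x34 = g x34) (h3 : f x13 = g x13)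
    (h4 : f x24 = g x24) (h5 : f x14 = g x14) (h6 : f x23 = g x23) : f = g := by
  apply Coprod.hom_ext
  · apply Coprod.hom_ext
    · exact M_ext h1 h2
    · exact M_ext h3 h4
  · exact M_ext h5 h6

lemma commA (a b : M) :
    Commute (Coprod.inl (Coprod.inl a) : K) (Coprod.inl (Coprod.inl b)) := by
  show _ * _ = _ * _
  rw [← map_mul, ← map_mul, ← map_mul, ← map_mul, mul_comm]

lemma commB (a b : M) :
    Commute (Coprod.inl (Coprod.inr a) : K) (Coprod.inl (Coprod.inr b)) := by
  show _ * _ = _ * _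
  rw [← map_mul, ← map_mul, ← map_mul, ← map_mul, mul_comm]

lemma commC (a b : M) :
    Commute (Coprod.inr a : K) (Coprod.inr b) := by
  show _ * _ = _ * _
  rw [← map_mul, ← map_mul, mul_comm]

/-- λ̂ : ordered-pair generators of K -/
def lam (i j : Fin 4) : K :=
  match i.1, j.1 with
  | 0, 1 => x12 | 1, 0 => x12⁻¹
  | 2, 3 => x34 | 3, 2 => x34⁻¹
  | 0, 2 => x13 | 2, 0 => x13⁻¹
  | 1, 3 => x24 | 3, 1 => x24⁻¹
  | 0, 3 => x14 | 3, 0 => x14⁻¹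
  | 1, 2 => x23 | 2, 1 => x23⁻¹
  | _, _ => 1

lemma lam_inv (i j : Fin 4) : lam j i = (lam i j)⁻¹ := by
  fin_cases i <;> fin_cases j <;> simp only [lam] <;> first | rfl | rw [inv_inv] | simp

set_option maxHeartbeats 1000000 in
lemma comm_lam {i j k l : Fin 4} (hij : i ≠ j) (hkl : k ≠ l)
    (h1 : i ≠ k) (h2 : i ≠ l) (h3 : j ≠ k) (h4 : j ≠ l) :
    Commute (lam i j) (lam k l) := by
  fin_cases i <;> fin_cases j <;> (try exact absurd rfl hij) <;>
  fin_cases k <;> fin_cases l <;>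
  first
    | exact absurd rfl hkl
    | exact absurd rfl h1 | exact absurd rfl h2 | exact absurd rfl h3 | exact absurd rfl h4
    | exact commA _ _ | exact (commA _ _).inv_left | exact (commA _ _).inv_right
    | exact (commA _ _).inv_left.inv_right
    | exact commB _ _ | exact (commB _ _).inv_left | exact (commB _ _).inv_right
    | exact (commB _ _).inv_left.inv_right
    | exact commC _ _ | exact (commC _ _).inv_left | exact (commC _ _).inv_right
    | exact (commC _ _).inv_left.inv_right


/-- The homomorphism K → K induced by a permutation. -/
def A (σ : Equiv.Perm (Fin 4)) : K →* K :=
  Coprod.lift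
    (Coprod.lift
      (hp (lam (σ 0) (σ 1)) (lam (σ 2) (σ 3))
        (comm_lam (Equiv.injective σ |>.ne (by decide)) (Equiv.injective σ |>.ne (by decide)) (Equiv.injective σ |>.ne (by decide)) (Equiv.injective σ |>.ne (by decide)) (Equiv.injective σ |>.ne (by decide)) (Equiv.injective σ |>.ne (by decide))))
      (hp (lam (σ 0) (σ 2)) (lam (σ 1) (σ 3))
        (comm_lam (Equiv.injective σ |>.ne (by decide)) (Equiv.injective σ |>.ne (by decide)) (Equiv.injective σ |>.ne (by decide)) (Equiv.injective σ |>.ne (by decide)) (Equiv.injective σ |>.ne (by decide)) (Equiv.injective σ |>.ne (by decide)))))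
    (hp (lam (σ 0) (σ 3)) (lam (σ 1) (σ 2))
      (comm_lam (Equiv.injective σ |>.ne (by decide)) (Equiv.injective σ |>.ne (by decide)) (Equiv.injective σ |>.ne (by decide)) (Equiv.injective σ |>.ne (by decide)) (Equiv.injective σ |>.ne (by decide)) (Equiv.injective σ |>.ne (by decide))))

lemma A_lam01 (σ : Equiv.Perm (Fin 4)) : A σ (lam 0 1) = lam (σ 0) (σ 1) := by
  show A σ x12 = _; simp [A, x12]
lemma A_lam34 (σ : Equiv.Perm (Fin 4)) : A σ (lam 2 3) = lam (σ 2) (σ 3) := by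
  show A σ x34 = _; simp [A, x34]
lemma A_lam02 (σ : Equiv.Perm (Fin 4)) : A σ (lam 0 2) = lam (σ 0) (σ 2) := by
  show A σ x13 = _; simp [A, x13]
lemma A_lam13 (σ : Equiv.Perm (Fin 4)) : A σ (lam 1 3) = lam (σ 1) (σ 3) := by
  show A σ x24 = _; simp [A, x24]
lemma A_lam03 (σ : Equiv.Perm (Fin 4)) : A σ (lam 0 3) = lam (σ 0) (σ 3) := by
  show A σ x14 = _; simp [A, x14]
lemma A_lam12 (σ : Equiv.Perm (Fin 4)) : A σ (lam 1 2) = lam (σ 1) (σ 2) := by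
  show A σ x23 = _; simp [A, x23]

lemma A_lam10 (σ : Equiv.Perm (Fin 4)) : A σ (lam 1 0) = lam (σ 1) (σ 0) := by
  rw [lam_inv 0 1, map_inv (A σ), A_lam01, ← lam_inv]
lemma A_lam43 (σ : Equiv.Perm (Fin 4)) : A σ (lam 3 2) = lam (σ 3) (σ 2) := by
  rw [lam_inv 2 3, map_inv (A σ), A_lam34, ← lam_inv]
lemma A_lam20 (σ : Equiv.Perm (Fin 4)) : A σ (lam 2 0) = lam (σ 2) (σ 0) := by
  rw [lam_inv 0 2, map_inv (A σ), A_lam02, ← lam_inv]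
lemma A_lam31 (σ : Equiv.Perm (Fin 4)) : A σ (lam 3 1) = lam (σ 3) (σ 1) := by
  rw [lam_inv 1 3, map_inv (A σ), A_lam13, ← lam_inv]
lemma A_lam30 (σ : Equiv.Perm (Fin 4)) : A σ (lam 3 0) = lam (σ 3) (σ 0) := by
  rw [lam_inv 0 3, map_inv (A σ), A_lam03, ← lam_inv]
lemma A_lam21 (σ : Equiv.Perm (Fin 4)) : A σ (lam 2 1) = lam (σ 2) (σ 1) := by
  rw [lam_inv 1 2, map_inv (A σ), A_lam12, ← lam_inv]

lemma A_lam (σ : Equiv.Perm (Fin 4)) {i j : Fin 4} (h : i ≠ j) :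
    A σ (lam i j) = lam (σ i) (σ j) := by
  fin_cases i <;> fin_cases j <;>
    first
    | exact absurd rfl h
    | exact A_lam01 σ | exact A_lam34 σ | exact A_lam02 σ | exact A_lam13 σ
    | exact A_lam03 σ | exact A_lam12 σ
    | exact A_lam10 σ | exact A_lam43 σ | exact A_lam20 σ | exact A_lam31 σ
    | exact A_lam30 σ | exact A_lam21 σ

lemma A_mul (σ τ : Equiv.Perm (Fin 4)) : A (σ * τ) = (A σ).comp (A τ) := by
  apply K_ext
  · show A (σ * τ) (lam 0 1) = A σ (A τ (lam 0 1))
    rw [A_lam (σ * τ) (show (0 : Fin 4) ≠ 1 by decide),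
      A_lam τ (show (0 : Fin 4) ≠ 1 by decide),
      A_lam σ (Equiv.injective τ |>.ne (show (0 : Fin 4) ≠ 1 by decide))]
    rfl
  · show A (σ * τ) (lam 2 3) = A σ (A τ (lam 2 3))
    rw [A_lam (σ * τ) (show (2 : Fin 4) ≠ 3 by decide),
      A_lam τ (show (2 : Fin 4) ≠ 3 by decide),
      A_lam σ (Equiv.injective τ |>.ne (show (2 : Fin 4) ≠ 3 by decide))]
    rfl
  · show A (σ * τ) (lam 0 2) = A σ (A τ (lam 0 2))
    rw [A_lam (σ * τ) (show (0 : Fin 4) ≠ 2 by decide),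
      A_lam τ (show (0 : Fin 4) ≠ 2 by decide),
      A_lam σ (Equiv.injective τ |>.ne (show (0 : Fin 4) ≠ 2 by decide))]
    rfl
  · show A (σ * τ) (lam 1 3) = A σ (A τ (lam 1 3))
    rw [A_lam (σ * τ) (show (1 : Fin 4) ≠ 3 by decide),
      A_lam τ (show (1 : Fin 4) ≠ 3 by decide),
      A_lam σ (Equiv.injective τ |>.ne (show (1 : Fin 4) ≠ 3 by decide))]
    rfl
  · show A (σ * τ) (lam 0 3) = A σ (A τ (lam 0 3))
    rw [A_lam (σ * τ) (show (0 : Fin 4) ≠ 3 by decide),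
      A_lam τ (show (0 : Fin 4) ≠ 3 by decide),
      A_lam σ (Equiv.injective τ |>.ne (show (0 : Fin 4) ≠ 3 by decide))]
    rfl
  · show A (σ * τ) (lam 1 2) = A σ (A τ (lam 1 2))
    rw [A_lam (σ * τ) (show (1 : Fin 4) ≠ 2 by decide),
      A_lam τ (show (1 : Fin 4) ≠ 2 by decide),
      A_lam σ (Equiv.injective τ |>.ne (show (1 : Fin 4) ≠ 2 by decide))]
    rfl

lemma A_one : A 1 = MonoidHom.id K := by
  apply K_ext
  · show A 1 (lam 0 1) = MonoidHom.id K (lam 0 1)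
    rw [A_lam 1 (show (0 : Fin 4) ≠ 1 by decide)]
    rfl
  · show A 1 (lam 2 3) = MonoidHom.id K (lam 2 3)
    rw [A_lam 1 (show (2 : Fin 4) ≠ 3 by decide)]
    rfl
  · show A 1 (lam 0 2) = MonoidHom.id K (lam 0 2)
    rw [A_lam 1 (show (0 : Fin 4) ≠ 2 by decide)]
    rfl
  · show A 1 (lam 1 3) = MonoidHom.id K (lam 1 3)
    rw [A_lam 1 (show (1 : Fin 4) ≠ 3 by decide)]
    rfl
  · show A 1 (lam 0 3) = MonoidHom.id K (lam 0 3)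
    rw [A_lam 1 (show (0 : Fin 4) ≠ 3 by decide)]
    rfl
  · show A 1 (lam 1 2) = MonoidHom.id K (lam 1 2)
    rw [A_lam 1 (show (1 : Fin 4) ≠ 2 by decide)]
    rfl

lemma A_inv_cancel (σ : Equiv.Perm (Fin 4)) (x : K) : A σ⁻¹ (A σ x) = x := by
  have h := DFunLike.congr_fun (A_mul σ⁻¹ σ) x
  rw [inv_mul_cancel, A_one] at h
  exact h.symm

/-- action of S4 on K -/
def actE (σ : Equiv.Perm (Fin 4)) : MulAut K :=
  { toFun := A σ, invFun := A σ⁻¹,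
    left_inv := A_inv_cancel σ,
    right_inv := fun x => by have := A_inv_cancel σ⁻¹ x; rwa [inv_inv] at this,
    map_mul' := map_mul (A σ) }

def act : Equiv.Perm (Fin 4) →* MulAut K :=
  MonoidHom.mk' actE (fun σ τ => by
    ext x
    show A (σ * τ) x = A σ (A τ x)
    rw [A_mul]; rfl)

lemma act_lam (σ : Equiv.Perm (Fin 4)) {i j : Fin 4} (h : i ≠ j) :
    act σ (lam i j) = lam (σ i) (σ j) := A_lam σ h


/-! ### VT side : generators, relations, derived identities -/

def sV (i : Fin 3) : VT 4 := PresentedGroup.of (Sum.inl i)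
def rV (i : Fin 3) : VT 4 := PresentedGroup.of (Sum.inr i)

lemma relOne {r : FreeGroup (Gen 4)} (h : r ∈ vtRels 4) :
    PresentedGroup.mk (vtRels 4) r = 1 :=
  (QuotientGroup.eq_one_iff _).2 (Subgroup.subset_normalClosure h)

lemma ss (i : Fin 3) : sV i * sV i = 1 := by
  have h := relOne (show (fs i * fs i : FreeGroup (Gen 4)) ∈ vtRels 4 from Or.inl ⟨i, rfl⟩)
  rw [map_mul] at h
  exact h

lemma rr (i : Fin 3) : rV i * rV i = 1 := by
  have h := relOne (show (fr i * fr i : FreeGroup (Gen 4)) ∈ vtRels 4 from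
    Or.inr (Or.inr (Or.inl ⟨i, rfl⟩)))
  rw [map_mul] at h
  exact h

lemma comm_ss : Commute (sV 0) (sV 2) := by
  have h := relOne (show (⁅fs 0, fs 2⁆ : FreeGroup (Gen 4)) ∈ vtRels 4 from
    Or.inr (Or.inl ⟨0, 2, by decide, rfl⟩))
  rw [map_commutatorElement] at h
  exact commutatorElement_eq_one_iff_commute.mp h

lemma comm_rr : Commute (rV 0) (rV 2) := by
  have h := relOne (show (⁅fr 0, fr 2⁆ : FreeGroup (Gen 4)) ∈ vtRels 4 from
    Or.inr (Or.inr (Or.inr (Or.inl ⟨0, 2, by decide, rfl⟩))))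
  rw [map_commutatorElement] at h
  exact commutatorElement_eq_one_iff_commute.mp h

lemma comm_rs : Commute (rV 0) (sV 2) := by
  have h := relOne (show (⁅fr 0, fs 2⁆ : FreeGroup (Gen 4)) ∈ vtRels 4 from
    Or.inr (Or.inr (Or.inr (Or.inr (Or.inr (Or.inl ⟨0, 2, by decide, Or.inl rfl⟩))))))
  rw [map_commutatorElement] at h
  exact commutatorElement_eq_one_iff_commute.mp h

lemma comm_sr : Commute (sV 0) (rV 2) := by
  have h := relOne (show (⁅fs 0, fr 2⁆ : FreeGroup (Gen 4)) ∈ vtRels 4 from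
    Or.inr (Or.inr (Or.inr (Or.inr (Or.inr (Or.inl ⟨0, 2, by decide, Or.inr rfl⟩))))))
  rw [map_commutatorElement] at h
  exact commutatorElement_eq_one_iff_commute.mp h

lemma rbraid (i j : Fin 3) (hij : (j : ℕ) = (i : ℕ) + 1) :
    rV i * rV j * rV i = rV j * rV i * rV j := by
  have h := relOne (show (fr i * fr j * fr i * (fr j * fr i * fr j)⁻¹ :
      FreeGroup (Gen 4)) ∈ vtRels 4 from Or.inr (Or.inr (Or.inr (Or.inr (Or.inl ⟨i, j, hij, rfl⟩)))))
  rw [map_mul, map_inv, map_mul, map_mul, map_mul] at h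
  exact mul_inv_eq_one.mp h

lemma mbraid (i j : Fin 3) (hij : (j : ℕ) = (i : ℕ) + 1) :
    rV i * rV j * sV i = sV j * rV i * rV j := by
  have h := relOne (show (fr i * fr j * fs i * (fs j * fr i * fr j)⁻¹ :
      FreeGroup (Gen 4)) ∈ vtRels 4 from Or.inr (Or.inr (Or.inr (Or.inr (Or.inr (Or.inr ⟨i, j, hij, rfl⟩))))))
  rw [map_mul, map_inv, map_mul, map_mul, map_mul] at h
  exact mul_inv_eq_one.mp h

/- continuation ("(· * x)") forms -/
@[simp] lemma ss' (i : Fin 3) (x : VT 4) : sV i * (sV i * x) = x := by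
  rw [← mul_assoc, ss, one_mul]
@[simp] lemma rr' (i : Fin 3) (x : VT 4) : rV i * (rV i * x) = x := by
  rw [← mul_assoc, rr, one_mul]

lemma sV_inv (i : Fin 3) : (sV i)⁻¹ = sV i := inv_eq_of_mul_eq_one_left (ss i)
lemma rV_inv (i : Fin 3) : (rV i)⁻¹ = rV i := inv_eq_of_mul_eq_one_left (rr i)

lemma Xss (x : VT 4) : sV 2 * (sV 0 * x) = sV 0 * (sV 2 * x) := by
  rw [← mul_assoc, ← comm_ss.eq, mul_assoc]
lemma Xrr (x : VT 4) : rV 2 * (rV 0 * x) = rV 0 * (rV 2 * x) := by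
  rw [← mul_assoc, ← comm_rr.eq, mul_assoc]
lemma Xsr (x : VT 4) : sV 2 * (rV 0 * x) = rV 0 * (sV 2 * x) := by
  rw [← mul_assoc, ← comm_rs.eq, mul_assoc]
lemma Xrs (x : VT 4) : rV 2 * (sV 0 * x) = sV 0 * (rV 2 * x) := by
  rw [← mul_assoc, ← comm_sr.eq, mul_assoc]

lemma b010 (x : VT 4) : rV 0 * (rV 1 * (rV 0 * x)) = rV 1 * (rV 0 * (rV 1 * x)) := by
  rw [← mul_assoc, ← mul_assoc, rbraid 0 1 rfl, mul_assoc, mul_assoc]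
lemma b121 (x : VT 4) : rV 1 * (rV 2 * (rV 1 * x)) = rV 2 * (rV 1 * (rV 2 * x)) := by
  rw [← mul_assoc, ← mul_assoc, rbraid 1 2 rfl, mul_assoc, mul_assoc]
lemma m01 (x : VT 4) : rV 0 * (rV 1 * (sV 0 * x)) = sV 1 * (rV 0 * (rV 1 * x)) := by
  rw [← mul_assoc, ← mul_assoc, mbraid 0 1 rfl, mul_assoc, mul_assoc]
lemma m12 (x : VT 4) : rV 1 * (rV 2 * (sV 1 * x)) = sV 2 * (rV 1 * (rV 2 * x)) := by
  rw [← mul_assoc, ← mul_assoc, mbraid 1 2 rfl, mul_assoc, mul_assoc]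

/- expansions of s1, s2 -/
lemma e1 (x : VT 4) : sV 1 * x = rV 0 * (rV 1 * (sV 0 * (rV 1 * (rV 0 * x)))) := by
  rw [m01, rr', rr']
lemma e2 (x : VT 4) : sV 2 * x = rV 1 * (rV 2 * (sV 1 * (rV 2 * (rV 1 * x)))) := by
  rw [m12, rr', rr']
lemma m01a (x : VT 4) : rV 1 * (sV 0 * x) = rV 0 * (sV 1 * (rV 0 * (rV 1 * x))) := by
  conv_lhs => rw [← rr' 0 (rV 1 * (sV 0 * x)), m01]
lemma r2s1 (x : VT 4) : rV 2 * (sV 1 * x) = rV 1 * (sV 2 * (rV 1 * (rV 2 * x))) := by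
  conv_lhs => rw [← rr' 1 (rV 2 * (sV 1 * x)), m12]
lemma s1r0 (x : VT 4) : sV 1 * (rV 0 * x) = rV 0 * (rV 1 * (sV 0 * (rV 1 * x))) := by
  rw [e1 (rV 0 * x), rr']
lemma s1r1r0 (x : VT 4) : sV 1 * (rV 1 * (rV 0 * x)) = rV 0 * (rV 1 * (sV 0 * (rV 0 * (rV 1 * x)))) := by
  rw [e1 (rV 1 * (rV 0 * x)), ← b010, rr']
lemma r0s1r1 (x : VT 4) : rV 0 * (sV 1 * (rV 1 * x)) = rV 1 * (sV 0 * (rV 0 * (rV 1 * (rV 0 * x)))) := by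
  rw [e1 (rV 1 * x), rr', ← b010]

/-! ### the six kernel generators -/

def L01 : VT 4 := sV 0 * rV 0
def L12 : VT 4 := sV 1 * rV 1
def L23 : VT 4 := sV 2 * rV 2
def L02 : VT 4 := rV 0 * L12 * rV 0
def L13 : VT 4 := rV 1 * L23 * rV 1
def L03 : VT 4 := rV 0 * L13 * rV 0

lemma conj_flip {r X Y : VT 4} (hr : r * r = 1) (h : r * X * r = Y) : r * Y * r = X := by
  rw [← h]
  calc r * (r * X * r) * r = (r * r) * X * (r * r) := by group
    _ = X := by rw [hr, one_mul, mul_one]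

/- conjugation table : rV i * L * rV i -/
lemma C0_01 : rV 0 * L01 * rV 0 = L01⁻¹ := by
  rw [L01, mul_inv_rev, sV_inv, rV_inv]
  simp [mul_assoc, rr]
lemma C0_23 : rV 0 * L23 * rV 0 = L23 := by
  rw [L23]
  simp only [mul_assoc]
  rw [← Xsr, ← Xrr]
  simp only [rr, rr', mul_one]
lemma C0_12 : rV 0 * L12 * rV 0 = L02 := rfl
lemma C0_13 : rV 0 * L13 * rV 0 = L03 := rfl
lemma C0_02 : rV 0 * L02 * rV 0 = L12 := conj_flip (rr 0) C0_12
lemma C0_03 : rV 0 * L03 * rV 0 = L13 := conj_flip (rr 0) C0_13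
lemma C1_12 : rV 1 * L12 * rV 1 = L12⁻¹ := by
  rw [L12, mul_inv_rev, sV_inv, rV_inv]
  simp [mul_assoc, rr]
lemma C1_23 : rV 1 * L23 * rV 1 = L13 := rfl
lemma C1_13 : rV 1 * L13 * rV 1 = L23 := conj_flip (rr 1) C1_23
lemma C1_01 : rV 1 * L01 * rV 1 = L02 := by
  rw [L01, L02, L12]
  simp only [mul_assoc]
  rw [m01a, b010]
  simp only [rr, rr', mul_one]
lemma C1_02 : rV 1 * L02 * rV 1 = L01 := conj_flip (rr 1) C1_01
lemma C1_03 : rV 1 * L03 * rV 1 = L03 := by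
  rw [L03, L13, L23]
  simp only [mul_assoc]
  rw [← b010, ← Xsr, ← Xrr, b010]
  simp only [rr, rr', mul_one]
lemma C2_23 : rV 2 * L23 * rV 2 = L23⁻¹ := by
  rw [L23, mul_inv_rev, sV_inv, rV_inv]
  simp [mul_assoc, rr]
lemma C2_01 : rV 2 * L01 * rV 2 = L01 := by
  rw [L01]
  simp only [mul_assoc]
  rw [Xrs]
  simp only [Xrr, rr, rr', mul_one]
lemma C2_12 : rV 2 * L12 * rV 2 = L13 := by
  rw [L12, L13, L23]
  simp only [mul_assoc]
  rw [r2s1, b121]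
  simp only [rr, rr', mul_one]
lemma C2_13 : rV 2 * L13 * rV 2 = L12 := conj_flip (rr 2) C2_12
lemma C2_02 : rV 2 * L02 * rV 2 = L03 := by
  rw [L02, L03, L13, L23, L12]
  simp only [mul_assoc]
  rw [Xrr, r2s1, b121, Xrr]
  simp only [rr, rr', mul_one]
lemma C2_03 : rV 2 * L03 * rV 2 = L02 := conj_flip (rr 2) C2_02

/- commutation of complementary generators -/
lemma commL1 : Commute L01 L23 := by
  show L01 * L23 = L23 * L01
  have h : ∀ x : VT 4, L01 * (L23 * x) = L23 * (L01 * x) := by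
    intro x
    rw [L01, L23]
    simp only [mul_assoc]
    rw [← Xsr, ← Xrr, Xrs, Xss]
  have := h 1
  rwa [mul_one, mul_one] at this

lemma commL2 : Commute L02 L13 := by
  show L02 * L13 = L13 * L02
  have h : ∀ x : VT 4, L02 * (L13 * x) = L13 * (L02 * x) := by
    intro x
    rw [L02, L13, L12, L23]
    simp only [mul_assoc]
    rw [← b010, ← Xsr, ← Xrr, s1r0]
    simp only [rr', ss']
    rw [r0s1r1]
    simp only [rr', ss']
    rw [Xrs, Xss]
  have := h 1
  rwa [mul_one, mul_one] at this

lemma commL3 : Commute L03 L12 := by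
  show L03 * L12 = L12 * L03
  have h : ∀ x : VT 4, L03 * (L12 * x) = L12 * (L03 * x) := by
    intro x
    rw [L03, L13, L12, L23]
    simp only [mul_assoc]
    rw [r0s1r1]
    simp only [rr', ss']
    rw [Xrs, Xss, s1r1r0]
    simp only [rr', ss']
    rw [← Xsr, ← Xrr]
  have := h 1
  rwa [mul_one, mul_one] at this



/-! ### the section θ : S₄ → VT₄ -/

abbrev tP (i : Fin 3) : Equiv.Perm (Fin 4) := tr (n := 4) i

lemma quad : ∀ x : Fin 4, x = 0 ∨ x = 1 ∨ x = 2 ∨ x = 3 := by decide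

def Dw (j : Fin 4) : VT 4 :=
  match j.1 with
  | 0 => rV 0 * rV 1 * rV 2
  | 1 => rV 1 * rV 2
  | 2 => rV 2
  | _ => 1

def Dp (j : Fin 4) : Equiv.Perm (Fin 4) :=
  match j.1 with
  | 0 => tP 0 * tP 1 * tP 2
  | 1 => tP 1 * tP 2
  | 2 => tP 2
  | _ => 1

def Ew (b : Fin 4) : VT 4 :=
  match b.1 with
  | 0 => rV 0 * rV 1
  | 1 => rV 1
  | _ => 1

def Ep (b : Fin 4) : Equiv.Perm (Fin 4) :=
  match b.1 with
  | 0 => tP 0 * tP 1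
  | 1 => tP 1
  | _ => 1

def Sw (c : Fin 4) : VT 4 := match c.1 with | 0 => rV 0 | _ => 1

def gE (τ : Equiv.Perm (Fin 4)) : VT 4 := Ew (τ 2) * Sw (((Ep (τ 2))⁻¹ * τ) 1)

def g (σ : Equiv.Perm (Fin 4)) : VT 4 := Dw (σ 3) * gE ((Dp (σ 3))⁻¹ * σ)

lemma stepS (τ : Equiv.Perm (Fin 4)) (h3 : τ 3 = 3) (h2 : τ 2 = 2) :
    Sw ((tP 0 * τ) 1) = rV 0 * Sw (τ 1) := by
  have k2 : τ 1 ≠ 2 := fun h => absurd (τ.injective (h.trans h2.symm)) (by decide)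
  have k3 : τ 1 ≠ 3 := fun h => absurd (τ.injective (h.trans h3.symm)) (by decide)
  have e1 : (tP 0 * τ) 1 = tP 0 (τ 1) := Equiv.Perm.mul_apply _ _ _
  rw [e1]
  rcases quad (τ 1) with hA | hA | hA | hA
  · rw [hA, show tP 0 (0 : Fin 4) = 1 by decide]
    show (1 : VT 4) = rV 0 * rV 0
    rw [rr]
  · rw [hA, show tP 0 (1 : Fin 4) = 0 by decide]
    show (rV 0 : VT 4) = rV 0 * 1
    rw [mul_one]
  · exact absurd hA k2
  · exact absurd hA k3

lemma stepE0 (τ : Equiv.Perm (Fin 4)) (h3 : τ 3 = 3) : gE (tP 0 * τ) = rV 0 * gE τ := by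
  have kb : τ 2 ≠ 3 := fun h => absurd (τ.injective (h.trans h3.symm)) (by decide)
  have e2 : (tP 0 * τ) 2 = tP 0 (τ 2) := Equiv.Perm.mul_apply _ _ _
  rcases quad (τ 2) with hb | hb | hb | hb
  · -- b = 0
    rw [hb, show tP 0 (0 : Fin 4) = (1 : Fin 4) by decide] at e2
    simp only [gE, e2, hb]
    have ep : (Ep 1)⁻¹ * (tP 0 * τ) = (Ep 0)⁻¹ * τ := by
      rw [← mul_assoc, show ((Ep 1)⁻¹ * tP 0 : Equiv.Perm (Fin 4)) = (Ep 0)⁻¹ by decide]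
    rw [ep]
    show rV 1 * Sw _ = rV 0 * (rV 0 * rV 1 * Sw _)
    simp only [mul_assoc, rr']
  · -- b = 1
    rw [hb, show tP 0 (1 : Fin 4) = (0 : Fin 4) by decide] at e2
    simp only [gE, e2, hb]
    have ep : (Ep 0)⁻¹ * (tP 0 * τ) = (Ep 1)⁻¹ * τ := by
      rw [← mul_assoc, show ((Ep 0)⁻¹ * tP 0 : Equiv.Perm (Fin 4)) = (Ep 1)⁻¹ by decide]
    rw [ep]
    show rV 0 * rV 1 * Sw _ = rV 0 * (rV 1 * Sw _)
    simp only [mul_assoc]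
  · -- b = 2
    rw [hb, show tP 0 (2 : Fin 4) = (2 : Fin 4) by decide] at e2
    simp only [gE, e2, hb]
    have ep : (Ep 2)⁻¹ * (tP 0 * τ) = tP 0 * ((Ep 2)⁻¹ * τ) := by
      rw [← mul_assoc, show ((Ep 2)⁻¹ * tP 0 : Equiv.Perm (Fin 4)) = tP 0 * (Ep 2)⁻¹ by decide,
        mul_assoc]
    have f3 : ((Ep 2)⁻¹ * τ) 3 = 3 := by
      rw [Equiv.Perm.mul_apply, h3]; decide
    have f2 : ((Ep 2)⁻¹ * τ) 2 = 2 := by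
      rw [Equiv.Perm.mul_apply, hb]; decide
    rw [ep, stepS _ f3 f2]
    show (1 : VT 4) * (rV 0 * Sw _) = rV 0 * ((1 : VT 4) * Sw _)
    simp only [one_mul]
  · exact absurd hb kb

lemma stepE1 (τ : Equiv.Perm (Fin 4)) (h3 : τ 3 = 3) : gE (tP 1 * τ) = rV 1 * gE τ := by
  have kb : τ 2 ≠ 3 := fun h => absurd (τ.injective (h.trans h3.symm)) (by decide)
  have e2 : (tP 1 * τ) 2 = tP 1 (τ 2) := Equiv.Perm.mul_apply _ _ _
  rcases quad (τ 2) with hb | hb | hb | hb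
  · -- b = 0
    rw [hb, show tP 1 (0 : Fin 4) = (0 : Fin 4) by decide] at e2
    simp only [gE, e2, hb]
    have ep : (Ep 0)⁻¹ * (tP 1 * τ) = tP 0 * ((Ep 0)⁻¹ * τ) := by
      rw [← mul_assoc, show ((Ep 0)⁻¹ * tP 1 : Equiv.Perm (Fin 4)) = tP 0 * (Ep 0)⁻¹ by decide,
        mul_assoc]
    have f3 : ((Ep 0)⁻¹ * τ) 3 = 3 := by
      rw [Equiv.Perm.mul_apply, h3]; decide
    have f2 : ((Ep 0)⁻¹ * τ) 2 = 2 := by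
      rw [Equiv.Perm.mul_apply, hb]; decide
    rw [ep, stepS _ f3 f2]
    show rV 0 * rV 1 * (rV 0 * Sw _) = rV 1 * (rV 0 * rV 1 * Sw _)
    simp only [mul_assoc]
    exact b010 _
  · -- b = 1
    rw [hb, show tP 1 (1 : Fin 4) = (2 : Fin 4) by decide] at e2
    simp only [gE, e2, hb]
    have ep : (Ep 2)⁻¹ * (tP 1 * τ) = (Ep 1)⁻¹ * τ := by
      rw [← mul_assoc, show ((Ep 2)⁻¹ * tP 1 : Equiv.Perm (Fin 4)) = (Ep 1)⁻¹ by decide]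
    rw [ep]
    show (1 : VT 4) * Sw _ = rV 1 * (rV 1 * Sw _)
    simp only [one_mul, rr']
  · -- b = 2
    rw [hb, show tP 1 (2 : Fin 4) = (1 : Fin 4) by decide] at e2
    simp only [gE, e2, hb]
    have ep : (Ep 1)⁻¹ * (tP 1 * τ) = (Ep 2)⁻¹ * τ := by
      rw [← mul_assoc, show ((Ep 1)⁻¹ * tP 1 : Equiv.Perm (Fin 4)) = (Ep 2)⁻¹ by decide]
    rw [ep]
    show rV 1 * Sw _ = rV 1 * ((1 : VT 4) * Sw _)
    simp only [one_mul]
  · exact absurd hb kb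

lemma stepD0 (σ : Equiv.Perm (Fin 4)) : g (tP 0 * σ) = rV 0 * g σ := by
  have e3 : (tP 0 * σ) 3 = tP 0 (σ 3) := Equiv.Perm.mul_apply _ _ _
  rcases quad (σ 3) with hj | hj | hj | hj
  · -- j = 0
    rw [hj, show tP 0 (0 : Fin 4) = (1 : Fin 4) by decide] at e3
    simp only [g, e3, hj]
    have ep : (Dp 1)⁻¹ * (tP 0 * σ) = (Dp 0)⁻¹ * σ := by
      rw [← mul_assoc, show ((Dp 1)⁻¹ * tP 0 : Equiv.Perm (Fin 4)) = (Dp 0)⁻¹ by decide]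
    rw [ep]
    show rV 1 * rV 2 * gE _ = rV 0 * (rV 0 * rV 1 * rV 2 * gE _)
    simp only [mul_assoc, rr']
  · -- j = 1
    rw [hj, show tP 0 (1 : Fin 4) = (0 : Fin 4) by decide] at e3
    simp only [g, e3, hj]
    have ep : (Dp 0)⁻¹ * (tP 0 * σ) = (Dp 1)⁻¹ * σ := by
      rw [← mul_assoc, show ((Dp 0)⁻¹ * tP 0 : Equiv.Perm (Fin 4)) = (Dp 1)⁻¹ by decide]
    rw [ep]
    show rV 0 * rV 1 * rV 2 * gE _ = rV 0 * (rV 1 * rV 2 * gE _)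
    simp only [mul_assoc]
  · -- j = 2
    rw [hj, show tP 0 (2 : Fin 4) = (2 : Fin 4) by decide] at e3
    simp only [g, e3, hj]
    have ep : (Dp 2)⁻¹ * (tP 0 * σ) = tP 0 * ((Dp 2)⁻¹ * σ) := by
      rw [← mul_assoc, show ((Dp 2)⁻¹ * tP 0 : Equiv.Perm (Fin 4)) = tP 0 * (Dp 2)⁻¹ by decide,
        mul_assoc]
    have f3 : ((Dp 2)⁻¹ * σ) 3 = 3 := by
      rw [Equiv.Perm.mul_apply, hj]; decide
    rw [ep, stepE0 _ f3]
    show rV 2 * (rV 0 * gE _) = rV 0 * (rV 2 * gE _)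
    exact Xrr _
  · -- j = 3
    rw [hj, show tP 0 (3 : Fin 4) = (3 : Fin 4) by decide] at e3
    simp only [g, e3, hj]
    have ep : (Dp 3)⁻¹ * (tP 0 * σ) = tP 0 * ((Dp 3)⁻¹ * σ) := by
      rw [← mul_assoc, show ((Dp 3)⁻¹ * tP 0 : Equiv.Perm (Fin 4)) = tP 0 * (Dp 3)⁻¹ by decide,
        mul_assoc]
    have f3 : ((Dp 3)⁻¹ * σ) 3 = 3 := by
      rw [Equiv.Perm.mul_apply, hj]; decide
    rw [ep, stepE0 _ f3]
    show (1:VT 4) * (rV 0 * gE _) = rV 0 * ((1:VT 4) * gE _)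
    simp only [one_mul]

lemma stepD1 (σ : Equiv.Perm (Fin 4)) : g (tP 1 * σ) = rV 1 * g σ := by
  have e3 : (tP 1 * σ) 3 = tP 1 (σ 3) := Equiv.Perm.mul_apply _ _ _
  rcases quad (σ 3) with hj | hj | hj | hj
  · -- j = 0
    rw [hj, show tP 1 (0 : Fin 4) = (0 : Fin 4) by decide] at e3
    simp only [g, e3, hj]
    have ep : (Dp 0)⁻¹ * (tP 1 * σ) = tP 0 * ((Dp 0)⁻¹ * σ) := by
      rw [← mul_assoc, show ((Dp 0)⁻¹ * tP 1 : Equiv.Perm (Fin 4)) = tP 0 * (Dp 0)⁻¹ by decide,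
        mul_assoc]
    have f3 : ((Dp 0)⁻¹ * σ) 3 = 3 := by
      rw [Equiv.Perm.mul_apply, hj]; decide
    rw [ep, stepE0 _ f3]
    show rV 0 * rV 1 * rV 2 * (rV 0 * gE _) = rV 1 * (rV 0 * rV 1 * rV 2 * gE _)
    simp only [mul_assoc]
    rw [Xrr, b010]
  · -- j = 1
    rw [hj, show tP 1 (1 : Fin 4) = (2 : Fin 4) by decide] at e3
    simp only [g, e3, hj]
    have ep : (Dp 2)⁻¹ * (tP 1 * σ) = (Dp 1)⁻¹ * σ := by
      rw [← mul_assoc, show ((Dp 2)⁻¹ * tP 1 : Equiv.Perm (Fin 4)) = (Dp 1)⁻¹ by decide]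
    rw [ep]
    show rV 2 * gE _ = rV 1 * (rV 1 * rV 2 * gE _)
    simp only [mul_assoc, rr']
  · -- j = 2
    rw [hj, show tP 1 (2 : Fin 4) = (1 : Fin 4) by decide] at e3
    simp only [g, e3, hj]
    have ep : (Dp 1)⁻¹ * (tP 1 * σ) = (Dp 2)⁻¹ * σ := by
      rw [← mul_assoc, show ((Dp 1)⁻¹ * tP 1 : Equiv.Perm (Fin 4)) = (Dp 2)⁻¹ by decide]
    rw [ep]
    show rV 1 * rV 2 * gE _ = rV 1 * (rV 2 * gE _)
    simp only [mul_assoc]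
  · -- j = 3
    rw [hj, show tP 1 (3 : Fin 4) = (3 : Fin 4) by decide] at e3
    simp only [g, e3, hj]
    have ep : (Dp 3)⁻¹ * (tP 1 * σ) = tP 1 * ((Dp 3)⁻¹ * σ) := by
      rw [← mul_assoc, show ((Dp 3)⁻¹ * tP 1 : Equiv.Perm (Fin 4)) = tP 1 * (Dp 3)⁻¹ by decide,
        mul_assoc]
    have f3 : ((Dp 3)⁻¹ * σ) 3 = 3 := by
      rw [Equiv.Perm.mul_apply, hj]; decide
    rw [ep, stepE1 _ f3]
    show (1:VT 4) * (rV 1 * gE _) = rV 1 * ((1:VT 4) * gE _)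
    simp only [one_mul]

lemma stepD2 (σ : Equiv.Perm (Fin 4)) : g (tP 2 * σ) = rV 2 * g σ := by
  have e3 : (tP 2 * σ) 3 = tP 2 (σ 3) := Equiv.Perm.mul_apply _ _ _
  rcases quad (σ 3) with hj | hj | hj | hj
  · -- j = 0
    rw [hj, show tP 2 (0 : Fin 4) = (0 : Fin 4) by decide] at e3
    simp only [g, e3, hj]
    have ep : (Dp 0)⁻¹ * (tP 2 * σ) = tP 1 * ((Dp 0)⁻¹ * σ) := by
      rw [← mul_assoc, show ((Dp 0)⁻¹ * tP 2 : Equiv.Perm (Fin 4)) = tP 1 * (Dp 0)⁻¹ by decide,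
        mul_assoc]
    have f3 : ((Dp 0)⁻¹ * σ) 3 = 3 := by
      rw [Equiv.Perm.mul_apply, hj]; decide
    rw [ep, stepE1 _ f3]
    show rV 0 * rV 1 * rV 2 * (rV 1 * gE _) = rV 2 * (rV 0 * rV 1 * rV 2 * gE _)
    simp only [mul_assoc]
    rw [b121, ← Xrr]
  · -- j = 1
    rw [hj, show tP 2 (1 : Fin 4) = (1 : Fin 4) by decide] at e3
    simp only [g, e3, hj]
    have ep : (Dp 1)⁻¹ * (tP 2 * σ) = tP 1 * ((Dp 1)⁻¹ * σ) := by
      rw [← mul_assoc, show ((Dp 1)⁻¹ * tP 2 : Equiv.Perm (Fin 4)) = tP 1 * (Dp 1)⁻¹ by decide,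
        mul_assoc]
    have f3 : ((Dp 1)⁻¹ * σ) 3 = 3 := by
      rw [Equiv.Perm.mul_apply, hj]; decide
    rw [ep, stepE1 _ f3]
    show rV 1 * rV 2 * (rV 1 * gE _) = rV 2 * (rV 1 * rV 2 * gE _)
    simp only [mul_assoc]
    exact b121 _
  · -- j = 2
    rw [hj, show tP 2 (2 : Fin 4) = (3 : Fin 4) by decide] at e3
    simp only [g, e3, hj]
    have ep : (Dp 3)⁻¹ * (tP 2 * σ) = (Dp 2)⁻¹ * σ := by
      rw [← mul_assoc, show ((Dp 3)⁻¹ * tP 2 : Equiv.Perm (Fin 4)) = (Dp 2)⁻¹ by decide]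
    rw [ep]
    show (1:VT 4) * gE _ = rV 2 * (rV 2 * gE _)
    rw [one_mul, rr']
  · -- j = 3
    rw [hj, show tP 2 (3 : Fin 4) = (2 : Fin 4) by decide] at e3
    simp only [g, e3, hj]
    have ep : (Dp 2)⁻¹ * (tP 2 * σ) = (Dp 3)⁻¹ * σ := by
      rw [← mul_assoc, show ((Dp 2)⁻¹ * tP 2 : Equiv.Perm (Fin 4)) = (Dp 3)⁻¹ by decide]
    rw [ep]
    show rV 2 * gE _ = rV 2 * ((1:VT 4) * gE _)
    simp only [one_mul]

lemma g_one : g 1 = 1 := by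
  simp only [g, gE]
  rw [show ((1 : Equiv.Perm (Fin 4)) 3) = 3 by decide]
  rw [show ((Dp 3)⁻¹ * (1 : Equiv.Perm (Fin 4)) : Equiv.Perm (Fin 4)) = 1 by decide]
  rw [show ((1 : Equiv.Perm (Fin 4)) 2) = 2 by decide]
  rw [show ((Ep 2)⁻¹ * (1 : Equiv.Perm (Fin 4)) : Equiv.Perm (Fin 4)) = 1 by decide]
  rw [show ((1 : Equiv.Perm (Fin 4)) 1) = 1 by decide]
  show (1 : VT 4) * ((1 : VT 4) * (1 : VT 4)) = 1
  simp

lemma g_step (i : Fin 3) (σ : Equiv.Perm (Fin 4)) : g (tP i * σ) = rV i * g σ := by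
  fin_cases i
  · exact stepD0 σ
  · exact stepD1 σ
  · exact stepD2 σ

lemma g_t (i : Fin 3) : g (tP i) = rV i := by
  have h := g_step i 1
  rwa [mul_one, g_one, mul_one] at h

lemma mem_of_eq {G : Type*} [Group G] {H : Subgroup G} {a b : G} (h : a = b) (hb : b ∈ H) :
    a ∈ H := h ▸ hb

lemma gen4 : Subgroup.closure ({tP 0, tP 1, tP 2} : Set (Equiv.Perm (Fin 4))) = ⊤ := by
  rw [eq_top_iff, ← Equiv.Perm.closure_isSwap]
  refine (Subgroup.closure_le _).2 ?_
  rintro σ ⟨a, b, hab, rfl⟩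
  have h0 : tP 0 ∈ Subgroup.closure ({tP 0, tP 1, tP 2} : Set (Equiv.Perm (Fin 4))) :=
    Subgroup.subset_closure (by simp)
  have h1 : tP 1 ∈ Subgroup.closure ({tP 0, tP 1, tP 2} : Set (Equiv.Perm (Fin 4))) :=
    Subgroup.subset_closure (by simp)
  have h2 : tP 2 ∈ Subgroup.closure ({tP 0, tP 1, tP 2} : Set (Equiv.Perm (Fin 4))) :=
    Subgroup.subset_closure (by simp)
  fin_cases a <;> fin_cases b <;>
    first
    | exact absurd rfl hab
    | exact mem_of_eq (by decide) h0
    | exact mem_of_eq (by decide) h1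
    | exact mem_of_eq (by decide) h2
    | exact mem_of_eq (by decide) (mul_mem (mul_mem h1 h0) h1)
    | exact mem_of_eq (by decide) (mul_mem (mul_mem h2 h1) h2)
    | exact mem_of_eq (by decide) (mul_mem (mul_mem (mul_mem (mul_mem h2 h1) h0) h1) h2)

lemma g_mul (a b : Equiv.Perm (Fin 4)) : g (a * b) = g a * g b := by
  have key : ∀ x, x ∈ Subgroup.closure ({tP 0, tP 1, tP 2} : Set (Equiv.Perm (Fin 4))) →
      ∀ b, g (x * b) = g x * g b := by
    intro x hx
    induction hx using Subgroup.closure_induction with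
    | mem y hy =>
        intro b
        rcases hy with h | h | h <;> subst h <;> rw [g_step, g_t]
    | one => intro b; rw [one_mul, g_one, one_mul]
    | mul y z hy hz ihy ihz =>
        intro b
        rw [mul_assoc, ihy, ihz, ihy, mul_assoc]
    | inv y hy ih =>
        intro b
        have hb : ∀ c, g (y⁻¹ * c) = (g y)⁻¹ * g c := by
          intro c
          have h := ih (y⁻¹ * c)
          rw [← mul_assoc, mul_inv_cancel, one_mul] at h
          rw [h, ← mul_assoc, inv_mul_cancel, one_mul]
        have hy' : g y⁻¹ = (g y)⁻¹ := by
          have h1 := hb 1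
          rwa [mul_one, g_one, mul_one] at h1
        rw [hb b, hy']
  exact key a (by rw [gen4]; trivial) b

def θ : Equiv.Perm (Fin 4) →* VT 4 := MonoidHom.mk' g g_mul

lemma θ_t (i : Fin 3) : θ (tP i) = rV i := g_t i


/-! ### Φ : VT₄ → K ⋊ S₄ and Ψ back -/

abbrev GG := SemidirectProduct K (Equiv.Perm (Fin 4)) act
abbrev jl : K →* GG := SemidirectProduct.inl
abbrev jr : Equiv.Perm (Fin 4) →* GG := SemidirectProduct.inr

lemma inr_mul_inl (s : Equiv.Perm (Fin 4)) (b : K) :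
    jr s * jl b = jl (act s b) * jr s := by
  have h := SemidirectProduct.inl_aut (φ := act) s b
  rw [h, map_inv]
  group

lemma mk_mul (a b : K) (s t : Equiv.Perm (Fin 4)) :
    (jl a * jr s) * (jl b * jr t) = jl (a * act s b) * jr (s * t) := by
  calc (jl a * jr s) * (jl b * jr t) = jl a * ((jr s * jl b) * jr t) := by group
    _ = jl a * ((jl (act s b) * jr s) * jr t) := by rw [inr_mul_inl]
    _ = (jl a * jl (act s b)) * (jr s * jr t) := by group
    _ = jl (a * act s b) * jr (s * t) := by rw [← map_mul, ← map_mul]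

lemma inr_mul_mk (s : Equiv.Perm (Fin 4)) (b : K) (t : Equiv.Perm (Fin 4)) :
    jr s * (jl b * jr t) = jl (act s b) * jr (s * t) := by
  calc jr s * (jl b * jr t) = (jr s * jl b) * jr t := by group
    _ = (jl (act s b) * jr s) * jr t := by rw [inr_mul_inl]
    _ = jl (act s b) * jr (s * t) := by rw [mul_assoc, ← map_mul]

lemma mk_mul_inr (a : K) (s t : Equiv.Perm (Fin 4)) :
    (jl a * jr s) * jr t = jl a * jr (s * t) := by rw [mul_assoc, ← map_mul]

def glo (i : Fin 3) : Fin 4 := ⟨i.1, by omega⟩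
def ghi (i : Fin 3) : Fin 4 := ⟨i.1 + 1, by have := i.2; omega⟩

lemma lo_ne_hi (i : Fin 3) : glo i ≠ ghi i := by
  simp [glo, ghi, Fin.ext_iff]

lemma tr_lo (i : Fin 3) : tP i (glo i) = ghi i := Equiv.swap_apply_left _ _
lemma tr_hi (i : Fin 3) : tP i (ghi i) = glo i := Equiv.swap_apply_right _ _

def φS (i : Fin 3) : GG := jl (lam (glo i) (ghi i)) * jr (tP i)
def φR (i : Fin 3) : GG := jr (tP i)
def φgen : Gen 4 → GG := Sum.elim φS φR

lemma φS_sq (i : Fin 3) : φS i * φS i = 1 := by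
  have hcancel : lam (glo i) (ghi i) * lam (ghi i) (glo i) = 1 := by
    rw [lam_inv (glo i) (ghi i)]
    exact mul_inv_cancel (lam (glo i) (ghi i))
  rw [φS, mk_mul, act_lam _ (lo_ne_hi i), tr_lo, tr_hi, hcancel, tr_sq, map_one, map_one, one_mul]

lemma comm_φS02 : Commute (φS 0) (φS 2) := by
  show φS 0 * φS 2 = φS 2 * φS 0
  rw [φS, φS, mk_mul, mk_mul,
    act_lam _ (lo_ne_hi 2), act_lam _ (lo_ne_hi 0)]
  rw [show tP 0 (glo 2) = glo 2 by decide, show tP 0 (ghi 2) = ghi 2 by decide,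
    show tP 2 (glo 0) = glo 0 by decide, show tP 2 (ghi 0) = ghi 0 by decide]
  rw [(comm_lam (by decide) (by decide) (by decide) (by decide) (by decide) (by decide) :
    Commute (lam (glo 0) (ghi 0)) (lam (glo 2) (ghi 2))).eq]
  rw [show tP 0 * tP 2 = tP 2 * tP 0 by decide]

lemma comm_φR_φS : Commute (φR 0) (φS 2) := by
  show φR 0 * φS 2 = φS 2 * φR 0
  rw [φR, φS, inr_mul_mk, mk_mul_inr, act_lam _ (lo_ne_hi 2),
    show tP 0 (glo 2) = glo 2 by decide, show tP 0 (ghi 2) = ghi 2 by decide,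
    show tP 0 * tP 2 = tP 2 * tP 0 by decide]

lemma comm_φS_φR : Commute (φS 0) (φR 2) := by
  show φS 0 * φR 2 = φR 2 * φS 0
  rw [φR, φS, inr_mul_mk, mk_mul_inr, act_lam _ (lo_ne_hi 0),
    show tP 2 (glo 0) = glo 0 by decide, show tP 2 (ghi 0) = ghi 0 by decide,
    show tP 0 * tP 2 = tP 2 * tP 0 by decide]

lemma mbraid_φ0 : φR 0 * φR 1 * φS 0 = φS 1 * φR 0 * φR 1 := by
  rw [φR, φR, φS, φS, ← map_mul, inr_mul_mk, act_lam _ (lo_ne_hi 0),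
    mk_mul_inr, mk_mul_inr,
    show (tP 0 * tP 1) (glo 0) = glo 1 by decide,
    show (tP 0 * tP 1) (ghi 0) = ghi 1 by decide,
    show tP 0 * tP 1 * tP 0 = tP 1 * tP 0 * tP 1 by decide]

lemma mbraid_φ1 : φR 1 * φR 2 * φS 1 = φS 2 * φR 1 * φR 2 := by
  rw [φR, φR, φS, φS, ← map_mul, inr_mul_mk, act_lam _ (lo_ne_hi 1),
    mk_mul_inr, mk_mul_inr,
    show (tP 1 * tP 2) (glo 1) = glo 2 by decide,
    show (tP 1 * tP 2) (ghi 1) = ghi 2 by decide,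
    show tP 1 * tP 2 * tP 1 = tP 2 * tP 1 * tP 2 by decide]

lemma lt0 : 0 < 4 - 1 := by norm_num
lemma lt1 : 1 < 4 - 1 := by norm_num
lemma lt2 : 2 < 4 - 1 := by norm_num

lemma fin3cases {i j : Fin (4-1)} (hij : (i : ℕ) + 2 ≤ (j : ℕ)) :
    i = ⟨0, lt0⟩ ∧ j = ⟨2, lt2⟩ := by
  have h1 := j.isLt
  refine ⟨Fin.ext ?_, Fin.ext ?_⟩
  · show i.1 = 0
    omega
  · show j.1 = 2
    omega

def Φ : VT 4 →* GG :=
  PresentedGroup.toGroup (f := φgen) (by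
    rintro w (⟨i, rfl⟩ | ⟨i, j, hij, rfl⟩ | ⟨i, rfl⟩ | ⟨i, j, hij, rfl⟩ |
      ⟨i, j, hij, rfl⟩ | ⟨i, j, hij, (rfl | rfl)⟩ | ⟨i, j, hij, rfl⟩)
    · rw [map_mul]
      simp only [fs, FreeGroup.lift_apply_of, φgen, Sum.elim_inl]
      exact φS_sq i
    · obtain ⟨rfl, rfl⟩ := fin3cases hij
      rw [map_commutatorElement]
      simp only [fs, FreeGroup.lift_apply_of, φgen, Sum.elim_inl]
      exact commutatorElement_eq_one_iff_commute.mpr comm_φS02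
    · rw [map_mul]
      simp only [fr, FreeGroup.lift_apply_of, φgen, Sum.elim_inr]
      rw [φR, ← map_mul, tr_sq, map_one]
    · obtain ⟨rfl, rfl⟩ := fin3cases hij
      rw [map_commutatorElement]
      simp only [fr, FreeGroup.lift_apply_of, φgen, Sum.elim_inr]
      refine commutatorElement_eq_one_iff_commute.mpr ?_
      show φR 0 * φR 2 = φR 2 * φR 0
      rw [φR, φR, ← map_mul, ← map_mul, show tP 0 * tP 2 = tP 2 * tP 0 by decide]
    · have h1 : FreeGroup.lift φgen (fr i * fr j * fr (n := 4) i) = jr (tP i * tP j * tP i) := by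
        simp [fr, φgen, φR, map_mul]
      have h2 : FreeGroup.lift φgen (fr j * fr i * fr (n := 4) j) = jr (tP j * tP i * tP j) := by
        simp [fr, φgen, φR, map_mul]
      rw [map_mul, map_inv, h1, h2, tr_braid hij, mul_inv_cancel]
    · obtain ⟨rfl, rfl⟩ := fin3cases hij
      rw [map_commutatorElement]
      simp only [fr, fs, FreeGroup.lift_apply_of, φgen, Sum.elim_inl, Sum.elim_inr]
      exact commutatorElement_eq_one_iff_commute.mpr comm_φR_φS
    · obtain ⟨rfl, rfl⟩ := fin3cases hij
      rw [map_commutatorElement]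
      simp only [fr, fs, FreeGroup.lift_apply_of, φgen, Sum.elim_inl, Sum.elim_inr]
      exact commutatorElement_eq_one_iff_commute.mpr comm_φS_φR
    · have hc : i.1 = 0 ∨ i.1 = 1 := by have := j.isLt; omega
      have h1 : FreeGroup.lift φgen (fr i * fr j * fs (n := 4) i) = φR i * φR j * φS i := by
        simp [fr, fs, φgen, map_mul]
      have h2 : FreeGroup.lift φgen (fs j * fr i * fr (n := 4) j) = φS j * φR i * φR j := by
        simp [fr, fs, φgen, map_mul]
      rw [map_mul, map_inv, h1, h2]
      rcases hc with h | h
      · obtain rfl : i = ⟨0, lt0⟩ := Fin.ext h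
        obtain rfl : j = ⟨1, lt1⟩ := Fin.ext (by show j.1 = 1; omega)
        have h3 : φR ⟨0, lt0⟩ * φR ⟨1, lt1⟩ * φS ⟨0, lt0⟩
            = φS ⟨1, lt1⟩ * φR ⟨0, lt0⟩ * φR ⟨1, lt1⟩ := mbraid_φ0
        rw [h3, mul_inv_cancel]
      · obtain rfl : i = ⟨1, lt1⟩ := Fin.ext h
        obtain rfl : j = ⟨2, lt2⟩ := Fin.ext (by show j.1 = 2; omega)
        have h3 : φR ⟨1, lt1⟩ * φR ⟨2, lt2⟩ * φS ⟨1, lt1⟩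
            = φS ⟨2, lt2⟩ * φR ⟨1, lt1⟩ * φR ⟨2, lt2⟩ := mbraid_φ1
        rw [h3, mul_inv_cancel])

lemma Φ_s (i : Fin 3) : Φ (sV i) = φS i := PresentedGroup.toGroup.of _
lemma Φ_r (i : Fin 3) : Φ (rV i) = φR i := PresentedGroup.toGroup.of _

lemma perm_s (i : Fin 3) : perm 4 (sV i) = tP i := by
  simp only [perm, sV]
  rw [PresentedGroup.toGroup.of]
  rfl

lemma perm_r (i : Fin 3) : perm 4 (rV i) = tP i := by
  simp only [perm, rV]
  rw [PresentedGroup.toGroup.of]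
  rfl

lemma perm_comp : (perm 4) = SemidirectProduct.rightHom.comp Φ := by
  apply PresentedGroup.ext
  rintro (i | i)
  · show perm 4 (sV i) = SemidirectProduct.rightHom (Φ (sV i))
    rw [Φ_s, φS, map_mul, SemidirectProduct.rightHom_inl, SemidirectProduct.rightHom_inr, one_mul,
      perm_s]
  · show perm 4 (rV i) = SemidirectProduct.rightHom (Φ (rV i))
    rw [Φ_r, φR, SemidirectProduct.rightHom_inr, perm_r]

/-! ### Ψ_K -/

def ΨK : K →* VT 4 :=
  Coprod.lift (Coprod.lift (hp L01 L23 commL1) (hp L02 L13 commL2)) (hp L03 L12 commL3)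

def LL (i j : Fin 4) : VT 4 :=
  match i.1, j.1 with
  | 0, 1 => L01 | 1, 0 => L01⁻¹
  | 2, 3 => L23 | 3, 2 => L23⁻¹
  | 0, 2 => L02 | 2, 0 => L02⁻¹
  | 1, 3 => L13 | 3, 1 => L13⁻¹
  | 0, 3 => L03 | 3, 0 => L03⁻¹
  | 1, 2 => L12 | 2, 1 => L12⁻¹
  | _, _ => 1

lemma LL_inv (i j : Fin 4) : LL j i = (LL i j)⁻¹ := by
  fin_cases i <;> fin_cases j <;> simp only [LL] <;> first | rfl | rw [inv_inv] | simp

lemma ΨK_x12 : ΨK x12 = L01 := by show ΨK x12 = _; simp [ΨK, x12]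
lemma ΨK_x34 : ΨK x34 = L23 := by simp [ΨK, x34]
lemma ΨK_x13 : ΨK x13 = L02 := by simp [ΨK, x13]
lemma ΨK_x24 : ΨK x24 = L13 := by simp [ΨK, x24]
lemma ΨK_x14 : ΨK x14 = L03 := by simp [ΨK, x14]
lemma ΨK_x23 : ΨK x23 = L12 := by simp [ΨK, x23]

lemma ΨK_lam01 : ΨK (lam 0 1) = LL 0 1 := ΨK_x12
lemma ΨK_lam34 : ΨK (lam 2 3) = LL 2 3 := ΨK_x34
lemma ΨK_lam13 : ΨK (lam 0 2) = LL 0 2 := ΨK_x13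
lemma ΨK_lam24 : ΨK (lam 1 3) = LL 1 3 := ΨK_x24
lemma ΨK_lam14 : ΨK (lam 0 3) = LL 0 3 := ΨK_x14
lemma ΨK_lam23 : ΨK (lam 1 2) = LL 1 2 := ΨK_x23

lemma ΨK_lam (i j : Fin 4) (h : i ≠ j) : ΨK (lam i j) = LL i j := by
  have base : ∀ a b : Fin 4, a ≠ b → ΨK (lam a b) = LL a b → ΨK (lam b a) = LL b a := by
    intro a b _ hab
    rw [lam_inv a b, map_inv ΨK (lam a b), hab, ← LL_inv]
  fin_cases i <;> fin_cases j <;>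
    first
    | exact absurd rfl h
    | exact ΨK_lam01 | exact ΨK_lam34 | exact ΨK_lam13 | exact ΨK_lam24
    | exact ΨK_lam14 | exact ΨK_lam23
    | exact base _ _ (by decide) ΨK_lam01
    | exact base _ _ (by decide) ΨK_lam34
    | exact base _ _ (by decide) ΨK_lam13
    | exact base _ _ (by decide) ΨK_lam24
    | exact base _ _ (by decide) ΨK_lam14
    | exact base _ _ (by decide) ΨK_lam23

lemma compat : ∀ s : Equiv.Perm (Fin 4),
    ΨK.comp (act s).toMonoidHom = (MulAut.conj (θ s)).toMonoidHom.comp ΨK := by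
  have key : ∀ s, s ∈ Subgroup.closure ({tP 0, tP 1, tP 2} : Set (Equiv.Perm (Fin 4))) →
      ΨK.comp (act s).toMonoidHom = (MulAut.conj (θ s)).toMonoidHom.comp ΨK := by
    intro s hs
    induction hs using Subgroup.closure_induction with
    | mem y hy =>
        rcases hy with h | h | h <;> subst h
        · refine K_ext ?_ ?_ ?_ ?_ ?_ ?_ <;>
            simp only [MonoidHom.comp_apply, MulEquiv.coe_toMonoidHom, MulAut.conj_apply,
              θ_t, rV_inv]
          · rw [show (x12 : K) = lam 0 1 from rfl,
              act_lam _ (by decide : (0 : Fin 4) ≠ 1),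
              show tP 0 (0 : Fin 4) = 1 by decide, show tP 0 (1 : Fin 4) = 0 by decide,
              ΨK_lam 1 0 (by decide), ΨK_lam 0 1 (by decide)]
            exact C0_01.symm
          · rw [show (x34 : K) = lam 2 3 from rfl,
              act_lam _ (by decide : (2 : Fin 4) ≠ 3),
              show tP 0 (2 : Fin 4) = 2 by decide, show tP 0 (3 : Fin 4) = 3 by decide,
              ΨK_lam 2 3 (by decide)]
            exact C0_23.symm
          · rw [show (x13 : K) = lam 0 2 from rfl,
              act_lam _ (by decide : (0 : Fin 4) ≠ 2),
              show tP 0 (0 : Fin 4) = 1 by decide, show tP 0 (2 : Fin 4) = 2 by decide,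
              ΨK_lam 1 2 (by decide), ΨK_lam 0 2 (by decide)]
            exact C0_02.symm
          · rw [show (x24 : K) = lam 1 3 from rfl,
              act_lam _ (by decide : (1 : Fin 4) ≠ 3),
              show tP 0 (1 : Fin 4) = 0 by decide, show tP 0 (3 : Fin 4) = 3 by decide,
              ΨK_lam 0 3 (by decide), ΨK_lam 1 3 (by decide)]
            exact C0_13.symm
          · rw [show (x14 : K) = lam 0 3 from rfl,
              act_lam _ (by decide : (0 : Fin 4) ≠ 3),
              show tP 0 (0 : Fin 4) = 1 by decide, show tP 0 (3 : Fin 4) = 3 by decide,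
              ΨK_lam 1 3 (by decide), ΨK_lam 0 3 (by decide)]
            exact C0_03.symm
          · rw [show (x23 : K) = lam 1 2 from rfl,
              act_lam _ (by decide : (1 : Fin 4) ≠ 2),
              show tP 0 (1 : Fin 4) = 0 by decide, show tP 0 (2 : Fin 4) = 2 by decide,
              ΨK_lam 0 2 (by decide), ΨK_lam 1 2 (by decide)]
            exact C0_12.symm
        · refine K_ext ?_ ?_ ?_ ?_ ?_ ?_ <;>
            simp only [MonoidHom.comp_apply, MulEquiv.coe_toMonoidHom, MulAut.conj_apply,
              θ_t, rV_inv]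
          · rw [show (x12 : K) = lam 0 1 from rfl,
              act_lam _ (by decide : (0 : Fin 4) ≠ 1),
              show tP 1 (0 : Fin 4) = 0 by decide, show tP 1 (1 : Fin 4) = 2 by decide,
              ΨK_lam 0 2 (by decide), ΨK_lam 0 1 (by decide)]
            exact C1_01.symm
          · rw [show (x34 : K) = lam 2 3 from rfl,
              act_lam _ (by decide : (2 : Fin 4) ≠ 3),
              show tP 1 (2 : Fin 4) = 1 by decide, show tP 1 (3 : Fin 4) = 3 by decide,
              ΨK_lam 1 3 (by decide), ΨK_lam 2 3 (by decide)]
            exact C1_23.symm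
          · rw [show (x13 : K) = lam 0 2 from rfl,
              act_lam _ (by decide : (0 : Fin 4) ≠ 2),
              show tP 1 (0 : Fin 4) = 0 by decide, show tP 1 (2 : Fin 4) = 1 by decide,
              ΨK_lam 0 1 (by decide), ΨK_lam 0 2 (by decide)]
            exact C1_02.symm
          · rw [show (x24 : K) = lam 1 3 from rfl,
              act_lam _ (by decide : (1 : Fin 4) ≠ 3),
              show tP 1 (1 : Fin 4) = 2 by decide, show tP 1 (3 : Fin 4) = 3 by decide,
              ΨK_lam 2 3 (by decide), ΨK_lam 1 3 (by decide)]
            exact C1_13.symm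
          · rw [show (x14 : K) = lam 0 3 from rfl,
              act_lam _ (by decide : (0 : Fin 4) ≠ 3),
              show tP 1 (0 : Fin 4) = 0 by decide, show tP 1 (3 : Fin 4) = 3 by decide,
              ΨK_lam 0 3 (by decide)]
            exact C1_03.symm
          · rw [show (x23 : K) = lam 1 2 from rfl,
              act_lam _ (by decide : (1 : Fin 4) ≠ 2),
              show tP 1 (1 : Fin 4) = 2 by decide, show tP 1 (2 : Fin 4) = 1 by decide,
              ΨK_lam 2 1 (by decide), ΨK_lam 1 2 (by decide)]
            exact C1_12.symm
        · refine K_ext ?_ ?_ ?_ ?_ ?_ ?_ <;>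
            simp only [MonoidHom.comp_apply, MulEquiv.coe_toMonoidHom, MulAut.conj_apply,
              θ_t, rV_inv]
          · rw [show (x12 : K) = lam 0 1 from rfl,
              act_lam _ (by decide : (0 : Fin 4) ≠ 1),
              show tP 2 (0 : Fin 4) = 0 by decide, show tP 2 (1 : Fin 4) = 1 by decide,
              ΨK_lam 0 1 (by decide)]
            exact C2_01.symm
          · rw [show (x34 : K) = lam 2 3 from rfl,
              act_lam _ (by decide : (2 : Fin 4) ≠ 3),
              show tP 2 (2 : Fin 4) = 3 by decide, show tP 2 (3 : Fin 4) = 2 by decide,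
              ΨK_lam 3 2 (by decide), ΨK_lam 2 3 (by decide)]
            exact C2_23.symm
          · rw [show (x13 : K) = lam 0 2 from rfl,
              act_lam _ (by decide : (0 : Fin 4) ≠ 2),
              show tP 2 (0 : Fin 4) = 0 by decide, show tP 2 (2 : Fin 4) = 3 by decide,
              ΨK_lam 0 3 (by decide), ΨK_lam 0 2 (by decide)]
            exact C2_02.symm
          · rw [show (x24 : K) = lam 1 3 from rfl,
              act_lam _ (by decide : (1 : Fin 4) ≠ 3),
              show tP 2 (1 : Fin 4) = 1 by decide, show tP 2 (3 : Fin 4) = 2 by decide,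
              ΨK_lam 1 2 (by decide), ΨK_lam 1 3 (by decide)]
            exact C2_13.symm
          · rw [show (x14 : K) = lam 0 3 from rfl,
              act_lam _ (by decide : (0 : Fin 4) ≠ 3),
              show tP 2 (0 : Fin 4) = 0 by decide, show tP 2 (3 : Fin 4) = 2 by decide,
              ΨK_lam 0 2 (by decide), ΨK_lam 0 3 (by decide)]
            exact C2_03.symm
          · rw [show (x23 : K) = lam 1 2 from rfl,
              act_lam _ (by decide : (1 : Fin 4) ≠ 2),
              show tP 2 (1 : Fin 4) = 1 by decide, show tP 2 (2 : Fin 4) = 3 by decide,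
              ΨK_lam 1 3 (by decide), ΨK_lam 1 2 (by decide)]
            exact C2_12.symm
    | one =>
        refine MonoidHom.ext fun k => ?_
        simp
    | mul y z hy hz ihy ihz =>
        refine MonoidHom.ext fun k => ?_
        have hy' : ∀ m, ΨK (act y m) = θ y * ΨK m * (θ y)⁻¹ := fun m => by
          have h := DFunLike.congr_fun ihy m
          simpa using h
        have hz' : ∀ m, ΨK (act z m) = θ z * ΨK m * (θ z)⁻¹ := fun m => by
          have h := DFunLike.congr_fun ihz m
          simpa using h
        show ΨK (act (y * z) k) = θ (y * z) * ΨK k * (θ (y * z))⁻¹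
        rw [show act (y * z) k = act y (act z k) by rw [map_mul]; rfl, hy', hz',
          map_mul, mul_inv_rev]
        group
    | inv y hy ih =>
        refine MonoidHom.ext fun k => ?_
        have hy' : ∀ m, ΨK (act y m) = θ y * ΨK m * (θ y)⁻¹ := fun m => by
          have h := DFunLike.congr_fun ih m
          simpa using h
        show ΨK (act y⁻¹ k) = θ y⁻¹ * ΨK k * (θ y⁻¹)⁻¹
        have e0 : act y (act y⁻¹ k) = k := by
          rw [← MulAut.mul_apply, ← map_mul, mul_inv_cancel, map_one, MulAut.one_apply]
        have h1 := hy' (act y⁻¹ k)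
        rw [e0] at h1
        rw [map_inv θ y, inv_inv (θ y), h1]
        group
  intro s
  exact key s (by rw [gen4]; trivial)

def Ψ : GG →* VT 4 := SemidirectProduct.lift ΨK θ compat

lemma ΨΦ : Ψ.comp Φ = MonoidHom.id (VT 4) := by
  apply PresentedGroup.ext
  rintro (i | i)
  · show Ψ (Φ (sV i)) = sV i
    rw [Φ_s, φS, map_mul, Ψ, SemidirectProduct.lift_inl, SemidirectProduct.lift_inr, θ_t]
    have triple : ∀ x : Fin 3, x = 0 ∨ x = 1 ∨ x = 2 := by decide
    rcases triple i with rfl | rfl | rfl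
    · rw [show lam (glo 0) (ghi 0) = lam 0 1 from rfl, ΨK_lam01]
      show L01 * rV 0 = sV 0
      rw [L01, mul_assoc, rr, mul_one]
    · rw [show lam (glo 1) (ghi 1) = lam 1 2 from rfl, ΨK_lam23]
      show L12 * rV 1 = sV 1
      rw [L12, mul_assoc, rr, mul_one]
    · rw [show lam (glo 2) (ghi 2) = lam 2 3 from rfl, ΨK_lam34]
      show L23 * rV 2 = sV 2
      rw [L23, mul_assoc, rr, mul_one]
  · show Ψ (Φ (rV i)) = rV i
    rw [Φ_r, φR, Ψ, SemidirectProduct.lift_inr, θ_t]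

lemma ΦL01 : Φ L01 = jl x12 := by
  rw [L01, map_mul, Φ_s, Φ_r, φS, φR, mk_mul_inr, tr_sq, map_one, mul_one]
  rfl
lemma ΦL12 : Φ L12 = jl x23 := by
  rw [L12, map_mul, Φ_s, Φ_r, φS, φR, mk_mul_inr, tr_sq, map_one, mul_one]
  rfl
lemma ΦL23 : Φ L23 = jl x34 := by
  rw [L23, map_mul, Φ_s, Φ_r, φS, φR, mk_mul_inr, tr_sq, map_one, mul_one]
  rfl
lemma ΦL02 : Φ L02 = jl x13 := by
  rw [L02, map_mul, map_mul, Φ_r, ΦL12, φR, inr_mul_inl,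
    show (x23 : K) = lam 1 2 from rfl, act_lam _ (by decide : (1 : Fin 4) ≠ 2),
    show tP 0 (1 : Fin 4) = 0 by decide, show tP 0 (2 : Fin 4) = 2 by decide,
    mul_assoc, ← map_mul, tr_sq, map_one, mul_one]
  rfl

lemma ΦL13 : Φ L13 = jl x24 := by
  rw [L13, map_mul, map_mul, Φ_r, ΦL23, φR, inr_mul_inl,
    show (x34 : K) = lam 2 3 from rfl, act_lam _ (by decide : (2 : Fin 4) ≠ 3),
    show tP 1 (2 : Fin 4) = 1 by decide, show tP 1 (3 : Fin 4) = 3 by decide,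
    mul_assoc, ← map_mul, tr_sq, map_one, mul_one]
  rfl

lemma ΦL03 : Φ L03 = jl x14 := by
  rw [L03, map_mul, map_mul, Φ_r, ΦL13, φR, inr_mul_inl,
    show (x24 : K) = lam 1 3 from rfl, act_lam _ (by decide : (1 : Fin 4) ≠ 3),
    show tP 0 (1 : Fin 4) = 0 by decide, show tP 0 (3 : Fin 4) = 3 by decide,
    mul_assoc, ← map_mul, tr_sq, map_one, mul_one]
  rfl

lemma ΦΨK : Φ.comp ΨK = (jl : K →* GG) := by
  apply K_ext <;> simp only [MonoidHom.comp_apply]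
  · rw [ΨK_x12, ΦL01]
  · rw [ΨK_x34, ΦL23]
  · rw [ΨK_x13, ΦL02]
  · rw [ΨK_x24, ΦL13]
  · rw [ΨK_x14, ΦL03]
  · rw [ΨK_x23, ΦL12]

/-! ### assembling the isomorphism -/

lemma perm_apply (x : VT 4) : perm 4 x = SemidirectProduct.rightHom (Φ x) :=
  DFunLike.congr_fun perm_comp x

noncomputable def finalIso : (perm 4).ker ≃* K where
  toFun x := (Φ x.1).left
  invFun k := ⟨ΨK k, by
    rw [MonoidHom.mem_ker, perm_apply, show Φ (ΨK k) = jl k from DFunLike.congr_fun ΦΨK k,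
      SemidirectProduct.rightHom_inl]⟩
  left_inv := by
    rintro ⟨x, hx⟩
    ext
    show ΨK (Φ x).left = x
    have hr : (Φ x).right = 1 := by
      rw [MonoidHom.mem_ker, perm_apply] at hx
      exact hx
    have hx1 : Φ x = jl ((Φ x).left) := by
      conv_lhs => rw [← SemidirectProduct.inl_left_mul_inr_right (Φ x)]
      rw [hr, map_one, mul_one]
    have hid := DFunLike.congr_fun ΨΦ x
    simp only [MonoidHom.comp_apply, MonoidHom.id_apply] at hid
    rw [hx1] at hid
    rw [show Ψ (jl ((Φ x).left)) = ΨK ((Φ x).left) from SemidirectProduct.lift_inl _ _ _ _] at hid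
    exact hid
  right_inv := by
    intro k
    show (Φ (ΨK k)).left = k
    rw [show Φ (ΨK k) = jl k from DFunLike.congr_fun ΦΨK k]
    rfl
  map_mul' := by
    rintro ⟨x, hx⟩ ⟨y, hy⟩
    show (Φ (x * y)).left = (Φ x).left * (Φ y).left
    rw [MonoidHom.mem_ker, perm_apply] at hx
    have hr : (Φ x).right = 1 := hx
    rw [map_mul, SemidirectProduct.mul_left, hr, map_one, MulAut.one_apply]

/-- `PVT_4` is isomorphic to the free product `(ℤ × ℤ) * (ℤ × ℤ) * (ℤ × ℤ)`. -/
theorem pvt4_free_product :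
    Nonempty ((perm 4).ker ≃*
      Monoid.Coprod (Monoid.Coprod (Multiplicative (ℤ × ℤ)) (Multiplicative (ℤ × ℤ)))
        (Multiplicative (ℤ × ℤ))) := ⟨finalIso⟩

end VTG
end

section
/- The homomorphism φ: S_n → Aut(PVT_n) induced by the conjugation action of S_n ≤ VT_n on PVT_n is injective for every n ≥ 2. -/
namespace VTG

open scoped commutatorElement

abbrev Mf (n : ℕ) := Fin n → Fin n → ℤ

def eP {n : ℕ} (σ : Equiv.Perm (Fin n)) (w : Mf n) : Equiv.Perm (Mf n) where
  toFun f := fun k l => f (σ.symm k) (σ.symm l) + w k l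
  invFun f := fun k l => f (σ k) (σ l) - w (σ k) (σ l)
  left_inv f := by funext k l; simp
  right_inv f := by funext k l; simp

lemma eP_apply {n : ℕ} (σ : Equiv.Perm (Fin n)) (w : Mf n) (f : Mf n) (k l : Fin n) :
    eP σ w f k l = f (σ.symm k) (σ.symm l) + w k l := rfl

lemma eP_mul {n : ℕ} (σ τ : Equiv.Perm (Fin n)) (w v : Mf n) :
    eP σ w * eP τ v = eP (σ * τ) (fun k l => v (σ.symm k) (σ.symm l) + w k l) := by
  apply Equiv.ext; intro f; funext k l
  simp [eP_apply, add_assoc, Equiv.Perm.mul_def, Equiv.symm_trans_apply]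

lemma eP_one {n : ℕ} : eP (1 : Equiv.Perm (Fin n)) 0 = 1 := by
  apply Equiv.ext; intro f; funext k l; simp [eP_apply]; rfl

lemma eP_congr {n : ℕ} {σ τ : Equiv.Perm (Fin n)} {w v : Mf n}
    (h1 : σ = τ) (h2 : w = v) : eP σ w = eP τ v := by rw [h1, h2]

lemma eP_inv {n : ℕ} (σ : Equiv.Perm (Fin n)) (w : Mf n) :
    (eP σ w)⁻¹ = eP σ⁻¹ (fun k l => -(w (σ k) (σ l))) := by
  apply inv_eq_of_mul_eq_one_right
  rw [eP_mul, ← eP_one]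
  apply eP_congr (mul_inv_cancel σ)
  funext k l; simp

lemma eP_app_zero {n : ℕ} (σ : Equiv.Perm (Fin n)) (w : Mf n) : eP σ w 0 = w := by
  funext k l; simp [eP_apply]

def wv {n : ℕ} (i : Fin (n-1)) : Mf n := fun k l =>
  if k.1 = i.1 ∧ l.1 = i.1 + 1 then 1
  else if k.1 = i.1 + 1 ∧ l.1 = i.1 then -1 else 0

lemma tr_val {n : ℕ} (i : Fin (n-1)) (x : Fin n) :
    (tr i x).1 = if x.1 = i.1 then i.1 + 1 else if x.1 = i.1 + 1 then i.1 else x.1 := by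
  simp only [tr, Equiv.swap_apply_def, Fin.ext_iff]
  split_ifs <;> rfl

lemma tr_symm {n : ℕ} (i : Fin (n-1)) : Equiv.symm (tr (n := n) i) = tr i :=
  Equiv.symm_swap _ _

lemma wv_tr_tr {n : ℕ} (i : Fin (n-1)) (k l : Fin n) :
    wv i (tr i k) (tr i l) + wv i k l = 0 := by
  have := i.2
  simp only [wv, tr_val]
  split_ifs <;> omega

lemma wv_far {n : ℕ} {i j : Fin (n-1)} (h : (i : ℕ) + 2 ≤ (j : ℕ)) (k l : Fin n) :
    wv j (tr i k) (tr i l) = wv j k l := by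
  have := i.2; have := j.2
  simp only [wv, tr_val]
  split_ifs <;> omega

lemma wv_far' {n : ℕ} {i j : Fin (n-1)} (h : (i : ℕ) + 2 ≤ (j : ℕ)) (k l : Fin n) :
    wv i (tr j k) (tr j l) = wv i k l := by
  have := i.2; have := j.2
  simp only [wv, tr_val]
  split_ifs <;> omega

set_option maxHeartbeats 2000000 in
lemma wv_braid {n : ℕ} {i j : Fin (n-1)} (h : (j : ℕ) = (i : ℕ) + 1) (k l : Fin n) :
    wv i (tr j (tr i k)) (tr j (tr i l)) = wv j k l := by
  have := i.2; have := j.2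
  simp only [wv, tr_val]
  split_ifs <;> omega

def gimg {n : ℕ} : Gen n → Equiv.Perm (Mf n) :=
  Sum.elim (fun i => eP (tr i) (wv i)) (fun i => eP (tr i) 0)

def Phi (n : ℕ) : VT n →* Equiv.Perm (Mf n) :=
  PresentedGroup.toGroup (f := gimg) (by
    have key : ∀ (σ τ : Equiv.Perm (Fin n)) (w v : Mf n),
        σ * τ = τ * σ → (∀ k l, v (σ k) (σ l) = v k l) → (∀ k l, w (τ k) (τ l) = w k l) →
        Commute (eP σ w) (eP τ v) := by
      intro σ τ w v hc hv hw
      unfold Commute SemiconjBy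
      rw [eP_mul, eP_mul]
      apply eP_congr hc
      funext k l
      have h1 := hv (σ.symm k) (σ.symm l)
      have h2 := hw (τ.symm k) (τ.symm l)
      rw [Equiv.apply_symm_apply, Equiv.apply_symm_apply] at h1 h2
      rw [← h1, ← h2, add_comm]
    rintro w (⟨i, rfl⟩ | ⟨i, j, hij, rfl⟩ | ⟨i, rfl⟩ | ⟨i, j, hij, rfl⟩ |
      ⟨i, j, hij, rfl⟩ | ⟨i, j, hij, (rfl | rfl)⟩ | ⟨i, j, hij, rfl⟩)
    · show FreeGroup.lift gimg (fs i * fs i) = 1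
      rw [map_mul]
      simp only [fs, FreeGroup.lift_apply_of, gimg, Sum.elim_inl]
      rw [eP_mul, ← eP_one]
      exact eP_congr (tr_sq i) (funext fun k => funext fun l => by
        rw [tr_symm]; exact wv_tr_tr i k l)
    · rw [map_commutatorElement]
      simp only [fs, FreeGroup.lift_apply_of, gimg, Sum.elim_inl]
      refine commutatorElement_eq_one_iff_commute.mpr (key _ _ _ _ (tr_commute hij) ?_ ?_)
      · exact fun k l => wv_far hij k l
      · exact fun k l => wv_far' hij k l
    · show FreeGroup.lift gimg (fr i * fr i) = 1
      rw [map_mul]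
      simp only [fr, FreeGroup.lift_apply_of, gimg, Sum.elim_inr]
      rw [eP_mul, ← eP_one]
      exact eP_congr (tr_sq i) (funext fun k => funext fun l => by simp)
    · rw [map_commutatorElement]
      simp only [fr, FreeGroup.lift_apply_of, gimg, Sum.elim_inr]
      refine commutatorElement_eq_one_iff_commute.mpr (key _ _ _ _ (tr_commute hij) ?_ ?_) <;>
        simp
    · have h1 : FreeGroup.lift gimg (fr i * fr j * fr (n := n) i)
          = eP (tr i * tr j * tr i) 0 := by
        simp only [map_mul, fr, FreeGroup.lift_apply_of, gimg, Sum.elim_inr, eP_mul]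
        exact eP_congr rfl (funext fun k => funext fun l => by simp)
      have h2 : FreeGroup.lift gimg (fr j * fr i * fr (n := n) j)
          = eP (tr j * tr i * tr j) 0 := by
        simp only [map_mul, fr, FreeGroup.lift_apply_of, gimg, Sum.elim_inr, eP_mul]
        exact eP_congr rfl (funext fun k => funext fun l => by simp)
      rw [map_mul, map_inv, h1, h2, tr_braid hij, mul_inv_cancel]
    · rw [map_commutatorElement]
      simp only [fr, fs, FreeGroup.lift_apply_of, gimg, Sum.elim_inl, Sum.elim_inr]
      refine commutatorElement_eq_one_iff_commute.mpr (key _ _ _ _ (tr_commute hij) ?_ ?_)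
      · exact fun k l => wv_far hij k l
      · simp
    · rw [map_commutatorElement]
      simp only [fr, fs, FreeGroup.lift_apply_of, gimg, Sum.elim_inl, Sum.elim_inr]
      refine commutatorElement_eq_one_iff_commute.mpr (key _ _ _ _ (tr_commute hij) ?_ ?_)
      · simp
      · exact fun k l => wv_far' hij k l
    · have h1 : FreeGroup.lift gimg (fr i * fr j * fs (n := n) i)
          = eP (tr i * tr j * tr i) (wv j) := by
        simp only [map_mul, fr, fs, FreeGroup.lift_apply_of, gimg, Sum.elim_inl, Sum.elim_inr, eP_mul]
        refine eP_congr rfl (funext fun k => funext fun l => ?_)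
        simp only [Equiv.Perm.mul_def, Equiv.symm_trans_apply, tr_symm, Pi.zero_apply, add_zero,
          zero_add]
        exact wv_braid hij k l
      have h2 : FreeGroup.lift gimg (fs j * fr i * fr (n := n) j)
          = eP (tr j * tr i * tr j) (wv j) := by
        simp only [map_mul, fr, fs, FreeGroup.lift_apply_of, gimg, Sum.elim_inl, Sum.elim_inr, eP_mul]
        exact eP_congr rfl (funext fun k => funext fun l => by simp)
      rw [map_mul, map_inv, h1, h2, tr_braid hij, mul_inv_cancel])


lemma Phi_of {n : ℕ} (x : Gen n) : Phi n (PresentedGroup.of x) = gimg x :=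
  PresentedGroup.toGroup.of _

lemma perm_of {n : ℕ} (x : Gen n) : perm n (PresentedGroup.of x) = Sum.elim tr tr x :=
  PresentedGroup.toGroup.of _


lemma phi_form {n : ℕ} (x : VT n) : ∃ f, Phi n x = eP (perm n x) f := by
  refine PresentedGroup.generated_by _
    { carrier := {x | ∃ f : Mf n, Phi n x = eP (perm n x) f}
      one_mem' := ⟨0, by rw [map_one, map_one, eP_one]⟩
      mul_mem' := by
        rintro a b ⟨f, hf⟩ ⟨g', hg⟩
        exact ⟨_, by rw [map_mul, map_mul, hf, hg, eP_mul]⟩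
      inv_mem' := by
        rintro a ⟨f, hf⟩
        exact ⟨_, by rw [map_inv, map_inv, hf, eP_inv]⟩ } ?_ x
  rintro (i | i)
  · exact ⟨wv i, by
      rw [Phi_of, perm_of]; rfl⟩
  · exact ⟨0, by
      rw [Phi_of, perm_of]; rfl⟩

/-- The homomorphism `φ : S_n → Aut(PVT_n)` induced by the conjugation action of
`S_n ≤ VT_n` on `PVT_n = ker(π)` is injective (for any splitting `s` of `π`). -/
theorem conj_action_injective (n : ℕ) (hn : 2 ≤ n)
    (s : Equiv.Perm (Fin n) →* VT n)
    (hs : (perm n).comp s = MonoidHom.id (Equiv.Perm (Fin n))) :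
    Function.Injective ⇑((MulAut.conjNormal (H := (perm n).ker)).comp s) := by
  refine (injective_iff_map_eq_one _).mpr fun g hg => ?_
  simp only [MonoidHom.comp_apply] at hg
  have hsg : perm n (s g) = g := DFunLike.congr_fun hs g
  obtain ⟨f, hf⟩ := phi_form (s g)
  rw [hsg] at hf
  have hwv : ∀ (i : Fin (n-1)) (k l : Fin n),
      wv i (g.symm k) (g.symm l) = wv i k l := by
    intro i k l
    set xi : VT n := PresentedGroup.of (Sum.inl i) * PresentedGroup.of (Sum.inr i) with hxi
    have hof1 : perm n (PresentedGroup.of (Sum.inl i)) = tr i := perm_of _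
    have hof2 : perm n (PresentedGroup.of (Sum.inr i)) = tr i := perm_of _
    have hxk : xi ∈ (perm n).ker := by
      rw [MonoidHom.mem_ker, hxi, map_mul, hof1, hof2, tr_sq]
    have h2 : (MulAut.conjNormal (s g)) ⟨xi, hxk⟩ = ⟨xi, hxk⟩ := by rw [hg]; rfl
    have h3 : s g * xi * (s g)⁻¹ = xi := by
      have := congrArg Subtype.val h2
      rwa [MulAut.conjNormal_apply] at this
    have hcomm : s g * xi = xi * s g := by
      rw [mul_inv_eq_iff_eq_mul] at h3; exact h3
    have hPxi : Phi n xi = eP 1 (wv i) := by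
      rw [hxi, map_mul,
        show Phi n (PresentedGroup.of (Sum.inl i)) = eP (tr i) (wv i) from Phi_of _,
        show Phi n (PresentedGroup.of (Sum.inr i)) = eP (tr i) 0 from Phi_of _, eP_mul]
      exact eP_congr (tr_sq i) (funext fun k => funext fun l => by simp)
    have h4 : Phi n (s g) * Phi n xi = Phi n xi * Phi n (s g) := by
      rw [← map_mul, ← map_mul, hcomm]
    rw [hf, hPxi, eP_mul, eP_mul] at h4
    have h5 := congrArg (fun p : Equiv.Perm (Mf n) => p 0 k l) h4
    simp only [eP_app_zero] at h5
    have h6 : wv i (g.symm k) (g.symm l) + f k l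
        = f ((1 : Equiv.Perm (Fin n)).symm k) ((1 : Equiv.Perm (Fin n)).symm l) + wv i k l := h5
    simp only [Equiv.Perm.one_def, Equiv.refl_symm, Equiv.refl_apply] at h6
    omega
  have hpair : ∀ (i : Fin (n-1)) (hi : i.1 < n - 1),
      (g ⟨i.1, by omega⟩ : Fin n).1 = i.1 ∧ (g ⟨i.1 + 1, by omega⟩ : Fin n).1 = i.1 + 1 := by
    intro i hi
    set a : Fin n := ⟨i.1, by omega⟩
    set b : Fin n := ⟨i.1 + 1, by omega⟩
    have h7 := hwv i (g a) (g b)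
    rw [Equiv.symm_apply_apply, Equiv.symm_apply_apply] at h7
    have hab : wv (n := n) i a b = 1 := by simp [wv, a, b]
    rw [hab] at h7
    simp only [wv] at h7
    split_ifs at h7 <;> omega
  refine Equiv.ext fun m => ?_
  have hm := m.2
  by_cases hlt : m.1 < n - 1
  · have := (hpair ⟨m.1, hlt⟩ hlt).1
    exact Fin.ext (by simpa using this)
  · have hm1 : m.1 = n - 1 := by omega
    have hn2 : n - 2 < n - 1 := by omega
    have := (hpair ⟨n - 2, hn2⟩ hn2).2
    refine Fin.ext ?_
    have hb : (⟨n - 2 + 1, by omega⟩ : Fin n) = m := Fin.ext (by simp; omega)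
    rw [hb] at this
    simp at this ⊢
    omega


end VTG
end
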